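/- Let ‖·‖_u be a unitarily invariant matrix norm and consider minimal TT factorizations of a tensor A ∈ ℝ^{n₁×⋯×n_d}: a left-orthogonal one {U_s}_{s=1}^d, a right-orthogonal one {V_s}_{s=1}^d, and a t-orthogonal one {T_s}_{s=1}^d for some t ∈ [d]. Then μ_{u,<}(T_s) = μ_{u,<}(U_s) for s = 1,…,min{t, d−1}, and μ_{u,>}(T_s) = μ_{u,>}(V_s) for s = max{2, t},…,d. -/

import Mathlib

open scoped BigOperators
open Matrix

namespace TT

/-- Evaluation of a tensor-train factorization: `A(i₁,…,i_d) = Σ_α Π_s G_s(α_{s-1}, i_s, α_s)`. -/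
noncomputable def ttEval {d : ℕ} (n : Fin d → ℕ) (ρ : Fin (d + 1) → ℕ)
    (G : ∀ s : Fin d, Fin (ρ s.castSucc) → Fin (n s) → Fin (ρ s.succ) → ℝ) :
    (∀ s : Fin d, Fin (n s)) → ℝ := fun i =>
  ∑ α : ∀ s : Fin (d + 1), Fin (ρ s), ∏ s : Fin d, G s (α s.castSucc) (i s) (α s.succ)

/-- Left unfolding `G^< ∈ ℝ^{np×q}` of a third-order tensor `G ∈ ℝ^{p×n×q}`
(the row index `(i,a)` corresponds to the paper's `a + (i−1)p`). -/
def leftUnf {p n q : ℕ} (G : Fin p → Fin n → Fin q → ℝ) :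
    Matrix (Fin n × Fin p) (Fin q) ℝ := fun x c => G x.2 x.1 c

/-- Right unfolding `G^> ∈ ℝ^{p×nq}` of a third-order tensor `G ∈ ℝ^{p×n×q}`. -/
def rightUnf {p n q : ℕ} (G : Fin p → Fin n → Fin q → ℝ) :
    Matrix (Fin p) (Fin n × Fin q) ℝ := fun a x => G a x.1 x.2

/-- A third-order tensor is left-orthogonal if its left unfolding has orthonormal columns. -/
def LeftOrth {p n q : ℕ} (G : Fin p → Fin n → Fin q → ℝ) : Prop :=
  (leftUnf G)ᵀ * leftUnf G = 1

/-- A third-order tensor is right-orthogonal if its right unfolding has orthonormal rows. -/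
def RightOrth {p n q : ℕ} (G : Fin p → Fin n → Fin q → ℝ) : Prop :=
  rightUnf G * (rightUnf G)ᵀ = 1

/-- A TT factorization is minimal if the left and right unfoldings of all cores are
full-rank. -/
def MinimalTT {d : ℕ} {n : Fin d → ℕ} {ρ : Fin (d + 1) → ℕ}
    (G : ∀ s : Fin d, Fin (ρ s.castSucc) → Fin (n s) → Fin (ρ s.succ) → ℝ) : Prop :=
  ∀ s : Fin d, (leftUnf (G s)).rank = ρ s.succ ∧ (rightUnf (G s)).rank = ρ s.castSucc

/-- A TT factorization is `t`-orthogonal (`t ∈ [d]`, 1-based) if the cores `1,…,t−1` are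
left-orthogonal and the cores `t+1,…,d` are right-orthogonal. -/
def TOrth {d : ℕ} {n : Fin d → ℕ} {ρ : Fin (d + 1) → ℕ} (t : ℕ)
    (G : ∀ s : Fin d, Fin (ρ s.castSucc) → Fin (n s) → Fin (ρ s.succ) → ℝ) : Prop :=
  (∀ s : Fin d, s.val + 1 < t → LeftOrth (G s)) ∧
  (∀ s : Fin d, t < s.val + 1 → RightOrth (G s))

/-- Column space of a matrix. -/
def colSpace {γ δ : Type} [Fintype δ] [DecidableEq δ] (M : Matrix γ δ ℝ) :
    Submodule ℝ (γ → ℝ) := LinearMap.range M.mulVecLin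

/-- Row space of a matrix. -/
def rowSpace {γ δ : Type} [Fintype γ] [DecidableEq γ] (M : Matrix γ δ ℝ) :
    Submodule ℝ (δ → ℝ) := colSpace Mᵀ

/-- `‖G‖_{u,∞} = max_i ‖G(:,i,:)‖_u` for a third-order tensor `G ∈ ℝ^{p×n×q}`. -/
noncomputable def sliceNormInf (ν : ∀ p q : ℕ, Matrix (Fin p) (Fin q) ℝ → ℝ)
    {p n q : ℕ} (G : Fin p → Fin n → Fin q → ℝ) : ℝ :=
  ⨆ i : Fin n, ν p q (fun a b => G a i b)

/-- The `p`-block coherence `μ_{u,p}(M)` of a subspace `M ⊆ ℝ^{np}` with respect to a matrix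
norm `‖·‖_u`, defined through any matrix `Q` whose columns form an orthonormal basis of `M`
(the value is independent of the choice of `Q` for a unitarily invariant norm). -/
noncomputable def blockCoh (ν : ∀ p q : ℕ, Matrix (Fin p) (Fin q) ℝ → ℝ) (p n : ℕ)
    (M : Submodule ℝ ((Fin n × Fin p) → ℝ)) : ℝ :=
  sSup { y | ∃ (q : ℕ) (Q : Matrix (Fin n × Fin p) (Fin q) ℝ),
    Qᵀ * Q = 1 ∧ colSpace Q = M ∧
    y = ((n * p : ℝ) / q) * ⨆ i : Fin n, (ν q p (fun α j => Q (i, j) α)) ^ 2 }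

/-- Left coherence `μ_{u,<}(G) = μ_{u,p}(col(G^<))` of a third-order tensor `G ∈ ℝ^{p×n×q}`. -/
noncomputable def muLeft (ν : ∀ p q : ℕ, Matrix (Fin p) (Fin q) ℝ → ℝ)
    {p n q : ℕ} (G : Fin p → Fin n → Fin q → ℝ) : ℝ :=
  blockCoh ν p n (colSpace (leftUnf G))

/-- Right coherence `μ_{u,>}(G) = μ_{u,q}(row(G^>))` of a third-order tensor `G ∈ ℝ^{p×n×q}`. -/
noncomputable def muRight (ν : ∀ p q : ℕ, Matrix (Fin p) (Fin q) ℝ → ℝ)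
    {p n q : ℕ} (G : Fin p → Fin n → Fin q → ℝ) : ℝ :=
  blockCoh ν q n (rowSpace (rightUnf G))

end TT


namespace TT

def blk {n p : ℕ} (R : Matrix (Fin p) (Fin p) ℝ) : Matrix (Fin n × Fin p) (Fin n × Fin p) ℝ :=
  fun a b => if a.1 = b.1 then R a.2 b.2 else 0

lemma blk_mul {n p : ℕ} (R S : Matrix (Fin p) (Fin p) ℝ) :
    blk (n := n) R * blk S = blk (R * S) := by
  ext a b
  simp only [Matrix.mul_apply, blk, Fintype.sum_prod_type]
  rw [Finset.sum_eq_single a.1]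
  · by_cases h : a.1 = b.1 <;> simp [h, Matrix.mul_apply]
  · intro x _ hx
    simp [Ne.symm hx]
  · simp

lemma blk_transpose {n p : ℕ} (R : Matrix (Fin p) (Fin p) ℝ) :
    (blk (n := n) R)ᵀ = blk Rᵀ := by
  ext a b
  simp only [Matrix.transpose_apply, blk]
  by_cases h : a.1 = b.1
  · rw [if_pos h, if_pos h.symm]
  · rw [if_neg h, if_neg (fun hh => h hh.symm)]

lemma blk_one {n p : ℕ} : blk (n := n) (1 : Matrix (Fin p) (Fin p) ℝ) = 1 := by
  ext a b
  simp only [blk, Matrix.one_apply, Prod.ext_iff]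
  by_cases h : a.1 = b.1 <;> by_cases h2 : a.2 = b.2 <;> simp [h, h2]

lemma colSpace_mul_left {γ δ : Type} [Fintype γ] [Fintype δ] [DecidableEq γ] [DecidableEq δ]
    (B : Matrix γ γ ℝ) (Q : Matrix γ δ ℝ) :
    colSpace (B * Q) = Submodule.map B.mulVecLin (colSpace Q) := by
  unfold colSpace
  rw [Matrix.mulVecLin_mul, LinearMap.range_comp]

lemma blockCoh_map_aux (ν : ∀ p q : ℕ, Matrix (Fin p) (Fin q) ℝ → ℝ)
    (hinv : ∀ p q (A : Matrix (Fin p) (Fin q) ℝ)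
      (P : Matrix (Fin p) (Fin p) ℝ) (Q : Matrix (Fin q) (Fin q) ℝ),
      Pᵀ * P = 1 → P * Pᵀ = 1 → Qᵀ * Q = 1 → Q * Qᵀ = 1 →
      ν p q (P * A * Q) = ν p q A)
    {p nn : ℕ} (R : Matrix (Fin p) (Fin p) ℝ)
    (h1 : Rᵀ * R = 1) (h2 : R * Rᵀ = 1) (M : Submodule ℝ ((Fin nn × Fin p) → ℝ))
    (y : ℝ)
    (hy : y ∈ { y | ∃ (q : ℕ) (Q : Matrix (Fin nn × Fin p) (Fin q) ℝ),
      Qᵀ * Q = 1 ∧ colSpace Q = M ∧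
      y = ((nn * p : ℝ) / q) * ⨆ i : Fin nn, (ν q p (fun α j => Q (i, j) α)) ^ 2 }) :
    y ∈ { y | ∃ (q : ℕ) (Q : Matrix (Fin nn × Fin p) (Fin q) ℝ),
      Qᵀ * Q = 1 ∧ colSpace Q = Submodule.map (blk R).mulVecLin M ∧
      y = ((nn * p : ℝ) / q) * ⨆ i : Fin nn, (ν q p (fun α j => Q (i, j) α)) ^ 2 } := by
  obtain ⟨q, Q, hQ, hcol, rfl⟩ := hy
  refine ⟨q, blk (n := nn) R * Q, ?_, ?_, ?_⟩
  · rw [Matrix.transpose_mul, blk_transpose, Matrix.mul_assoc, ← Matrix.mul_assoc (blk Rᵀ),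
      blk_mul, h1, blk_one, Matrix.one_mul, hQ]
  · rw [colSpace_mul_left, hcol]
  · congr 1
    apply iSup_congr
    intro i
    congr 1
    have hslice : ∀ α j, (blk (n := nn) R * Q : Matrix (Fin nn × Fin p) (Fin q) ℝ) (i, j) α
        = ((Matrix.of fun α j => Q (i, j) α) * Rᵀ) α j := by
      intro α j
      simp only [Matrix.mul_apply, blk, Fintype.sum_prod_type, Matrix.transpose_apply]
      rw [Finset.sum_eq_single i]
      · simp [Finset.mul_sum, mul_comm]
      · intro x _ hx; simp [Ne.symm hx]
      · simp
    have hs2 : ((fun α j => (blk (n := nn) R * Q : Matrix (Fin nn × Fin p) (Fin q) ℝ) (i, j) α) : Matrix (Fin q) (Fin p) ℝ)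
        = (Matrix.of fun α j => Q (i, j) α) * Rᵀ := by
      funext α j; exact hslice α j
    rw [hs2]
    have := hinv q p (Matrix.of fun α j => Q (i, j) α) 1 Rᵀ (by simp) (by simp)
      (by rw [Matrix.transpose_transpose]; exact h2) (by rw [Matrix.transpose_transpose]; exact h1)
    rw [Matrix.one_mul] at this
    exact this.symm

lemma blockCoh_map (ν : ∀ p q : ℕ, Matrix (Fin p) (Fin q) ℝ → ℝ)
    (hinv : ∀ p q (A : Matrix (Fin p) (Fin q) ℝ)
      (P : Matrix (Fin p) (Fin p) ℝ) (Q : Matrix (Fin q) (Fin q) ℝ),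
      Pᵀ * P = 1 → P * Pᵀ = 1 → Qᵀ * Q = 1 → Q * Qᵀ = 1 →
      ν p q (P * A * Q) = ν p q A)
    {p nn : ℕ} (R : Matrix (Fin p) (Fin p) ℝ)
    (h1 : Rᵀ * R = 1) (h2 : R * Rᵀ = 1) (M : Submodule ℝ ((Fin nn × Fin p) → ℝ)) :
    blockCoh ν p nn (Submodule.map (blk R).mulVecLin M) = blockCoh ν p nn M := by
  unfold blockCoh
  congr 1
  apply Set.eq_of_subset_of_subset
  · intro y hy
    have hMM : M = Submodule.map (blk (n := nn) Rᵀ).mulVecLin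
        (Submodule.map (blk R).mulVecLin M) := by
      rw [← Submodule.map_comp, ← Matrix.mulVecLin_mul, blk_mul, h1, blk_one]
      simp
    have := blockCoh_map_aux ν hinv Rᵀ
      (by rw [Matrix.transpose_transpose]; exact h2)
      (by rw [Matrix.transpose_transpose]; exact h1)
      (Submodule.map (blk R).mulVecLin M) y hy
    rwa [← hMM] at this
  · intro y hy
    exact blockCoh_map_aux ν hinv R h1 h2 M y hy


section

variable {d : ℕ} {n : Fin d → ℕ}

abbrev Idx (n : Fin d → ℕ) := ∀ j : Fin d, Fin (n j)

noncomputable def resSum (k : Fin d) (x : Fin (n k)) (f : Idx n → ℝ) : ℝ :=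
  ∑ r : (∀ j : {j : Fin d // j ≠ k}, Fin (n j.val)), f ((Equiv.piSplitAt k _).symm (x, r))

def Inv (k : Fin d) (f : Idx n → ℝ) : Prop :=
  ∀ i x, f (Function.update i k x) = f i

lemma sum_resSum (k : Fin d) (f : Idx n → ℝ) :
    ∑ i, f i = ∑ x : Fin (n k), resSum k x f := by
  rw [← Equiv.sum_comp (Equiv.piSplitAt k (fun j => Fin (n j))).symm f, Fintype.sum_prod_type]
  rfl

lemma symm_apply_at (k : Fin d) (x : Fin (n k)) (r : ∀ j : {j : Fin d // j ≠ k}, Fin (n j.val)) :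
    ((Equiv.piSplitAt k (fun j => Fin (n j))).symm (x, r)) k = x := by
  simp [Equiv.piSplitAt_symm_apply]

lemma symm_update (k : Fin d) (x x' : Fin (n k)) (r : ∀ j : {j : Fin d // j ≠ k}, Fin (n j.val)) :
    ((Equiv.piSplitAt k (fun j => Fin (n j))).symm (x, r))
      = Function.update ((Equiv.piSplitAt k (fun j => Fin (n j))).symm (x', r)) k x := by
  funext j
  by_cases h : j = k
  · subst h
    simp [Equiv.piSplitAt_symm_apply]
  · simp [Equiv.piSplitAt_symm_apply, h, Function.update_of_ne h]

lemma resSum_inv (k : Fin d) (f : Idx n → ℝ) (hf : Inv k f) (x x' : Fin (n k)) :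
    resSum k x f = resSum k x' f := by
  unfold resSum
  apply Finset.sum_congr rfl
  intro r _
  rw [symm_update k x x' r, hf]

lemma resSum_mul_right (k : Fin d) (x : Fin (n k)) (f : Idx n → ℝ) (g : Fin (n k) → ℝ) :
    resSum k x (fun i => f i * g (i k)) = resSum k x f * g x := by
  unfold resSum
  rw [Finset.sum_mul]
  apply Finset.sum_congr rfl
  intro r _
  simp only []
  rw [symm_apply_at]

lemma card_mul_resSum (k : Fin d) (f : Idx n → ℝ) (hf : Inv k f) (x : Fin (n k)) :
    (n k : ℝ) * resSum k x f = ∑ i, f i := by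
  rw [sum_resSum k f]
  have : ∀ x' : Fin (n k), resSum k x' f = resSum k x f := fun x' => resSum_inv k f hf x' x
  rw [Finset.sum_congr rfl (fun x' _ => this x')]
  simp [mul_comm]

end

section
open TT


variable {d : ℕ} {n : Fin d → ℕ} {ρ : Fin (d + 1) → ℕ}

noncomputable def Lmat (G : ∀ s : Fin d, Fin (ρ s.castSucc) → Fin (n s) → Fin (ρ s.succ) → ℝ) :
    (s : ℕ) → (hs : s ≤ d) → Matrix (Idx n) (Fin (ρ ⟨s, Nat.lt_succ_of_le hs⟩)) ℝ
  | 0, _ => fun _ _ => 1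
  | s + 1, hs => fun i α =>
      ∑ β : Fin (ρ ⟨s, Nat.lt_succ_of_le (Nat.le_of_succ_le hs)⟩),
        Lmat G s (Nat.le_of_succ_le hs) i β * G ⟨s, hs⟩ β (i ⟨s, hs⟩) α

noncomputable def Rmat (G : ∀ s : Fin d, Fin (ρ s.castSucc) → Fin (n s) → Fin (ρ s.succ) → ℝ)
    (s : ℕ) (hs : s ≤ d) : Matrix (Fin (ρ ⟨s, Nat.lt_succ_of_le hs⟩)) (Idx n) ℝ :=
  if h : s < d then
    fun α i => ∑ β, G ⟨s, h⟩ α (i ⟨s, h⟩) β * Rmat G (s + 1) h β i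
  else fun _ _ => 1
  termination_by d - s
  decreasing_by omega

variable (G : ∀ s : Fin d, Fin (ρ s.castSucc) → Fin (n s) → Fin (ρ s.succ) → ℝ)

lemma Rmat_lt {s : ℕ} (hs : s ≤ d) (h : s < d) (α : Fin (ρ ⟨s, Nat.lt_succ_of_le hs⟩)) (i : Idx n) :
    Rmat G s hs α i = ∑ β, G ⟨s, h⟩ α (i ⟨s, h⟩) β * Rmat G (s + 1) h β i := by
  conv_lhs => rw [Rmat]
  exact congrArg (fun M : Matrix (Fin (ρ ⟨s, Nat.lt_succ_of_le hs⟩)) (Idx n) ℝ => M α i) (dif_pos h)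

lemma Rmat_last {s : ℕ} (hs : s ≤ d) (h : ¬ s < d) (α : Fin (ρ ⟨s, Nat.lt_succ_of_le hs⟩)) (i : Idx n) :
    Rmat G s hs α i = 1 := by
  conv_lhs => rw [Rmat]
  exact congrArg (fun M : Matrix (Fin (ρ ⟨s, Nat.lt_succ_of_le hs⟩)) (Idx n) ℝ => M α i) (dif_neg h)

lemma Lmat_congr : ∀ (s : ℕ) (hs : s ≤ d) (i i' : Idx n),
    (∀ j : Fin d, j.val < s → i j = i' j) →
    ∀ α, Lmat G s hs i α = Lmat G s hs i' α
  | 0, _, _, _, _, _ => rfl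
  | s + 1, hs, i, i', hii, α => by
      unfold Lmat
      apply Finset.sum_congr rfl
      intro β _
      rw [Lmat_congr s _ i i' (fun j hj => hii j (by omega)) β,
        hii ⟨s, hs⟩ (Nat.lt_succ_self s)]

lemma Rmat_congr (s : ℕ) (hs : s ≤ d) (i i' : Idx n)
    (hii : ∀ j : Fin d, s ≤ j.val → i j = i' j) :
    ∀ α, Rmat G s hs α i = Rmat G s hs α i' := by
  intro α
  by_cases h : s < d
  · rw [Rmat_lt G hs h, Rmat_lt G hs h]
    apply Finset.sum_congr rfl
    intro β _
    rw [Rmat_congr (s + 1) h i i' (fun j hj => hii j (by omega)) β,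
      hii ⟨s, h⟩ (Nat.le_refl s)]
  · rw [Rmat_last G hs h, Rmat_last G hs h]
  termination_by d - s

lemma Lmat_inv (s : ℕ) (hs : s ≤ d) (k : Fin d) (hk : s ≤ k.val)
    (α : Fin (ρ ⟨s, Nat.lt_succ_of_le hs⟩)) :
    Inv k (fun i => Lmat G s hs i α) := by
  intro i x
  apply Lmat_congr
  intro j hj
  exact Function.update_of_ne (by intro hh; subst hh; omega) _ _

lemma Rmat_inv_lt (s : ℕ) (hs : s ≤ d) (k : Fin d) (hk : k.val < s)
    (α : Fin (ρ ⟨s, Nat.lt_succ_of_le hs⟩)) :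
    Inv k (fun i => Rmat G s hs α i) := by
  intro i x
  apply Rmat_congr
  intro j hj
  exact Function.update_of_ne (by intro hh; subst hh; omega) _ _

def Nc (n : Fin d → ℕ) (s : ℕ) : ℝ := ∏ j : Fin d, if s ≤ j.val then (n j : ℝ) else 1
def Mc (n : Fin d → ℕ) (s : ℕ) : ℝ := ∏ j : Fin d, if j.val < s then (n j : ℝ) else 1

lemma Nc_pos (hn : ∀ j, 0 < n j) (s : ℕ) : 0 < Nc n s := by
  apply Finset.prod_pos
  intro j _
  by_cases h : s ≤ j.val <;> simp [h]
  · exact_mod_cast hn j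

lemma Mc_pos (hn : ∀ j, 0 < n j) (s : ℕ) : 0 < Mc n s := by
  apply Finset.prod_pos
  intro j _
  by_cases h : j.val < s <;> simp [h]
  · exact_mod_cast hn j

lemma Nc_succ (s : ℕ) (h : s < d) : Nc n s = (n ⟨s, h⟩ : ℝ) * Nc n (s + 1) := by
  unfold Nc
  rw [← Finset.prod_erase_mul _ _ (Finset.mem_univ (⟨s, h⟩ : Fin d)),
      ← Finset.prod_erase_mul _ _ (Finset.mem_univ (⟨s, h⟩ : Fin d))]
  rw [if_pos (Nat.le_refl s), if_neg (Nat.not_succ_le_self s)]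
  rw [mul_one, mul_comm]
  congr 1
  apply Finset.prod_congr rfl
  intro j hj
  have hjne : j ≠ ⟨s, h⟩ := (Finset.mem_erase.mp hj).1
  have : j.val ≠ s := by intro hh; exact hjne (Fin.ext hh)
  by_cases h2 : s ≤ j.val
  · rw [if_pos h2, if_pos (by omega)]
  · rw [if_neg h2, if_neg (by omega)]

lemma Mc_succ (s : ℕ) (h : s < d) : Mc n (s + 1) = (n ⟨s, h⟩ : ℝ) * Mc n s := by
  unfold Mc
  rw [← Finset.prod_erase_mul _ _ (Finset.mem_univ (⟨s, h⟩ : Fin d)),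
      ← Finset.prod_erase_mul _ _ (Finset.mem_univ (⟨s, h⟩ : Fin d))]
  rw [if_pos (Nat.lt_succ_self s), if_neg (Nat.lt_irrefl s)]
  rw [mul_one, mul_comm]
  congr 1
  apply Finset.prod_congr rfl
  intro j hj
  have hjne : j ≠ ⟨s, h⟩ := (Finset.mem_erase.mp hj).1
  have : j.val ≠ s := by intro hh; exact hjne (Fin.ext hh)
  by_cases h2 : j.val < s + 1
  · rw [if_pos h2, if_pos (by omega)]
  · rw [if_neg h2, if_neg (by omega)]

lemma Nc_zero : Nc n 0 = (Fintype.card (Idx n) : ℝ) := by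
  unfold Nc
  rw [Fintype.card_pi]
  simp

lemma Mc_d : Mc n d = (Fintype.card (Idx n) : ℝ) := by
  unfold Mc
  rw [Fintype.card_pi]
  push_cast
  apply Finset.prod_congr rfl
  intro j _
  rw [if_pos j.isLt]
  simp

lemma sum_mul_fiber (hn : ∀ j, 0 < n j) (k : Fin d) (F : Idx n → ℝ) (g : Fin (n k) → ℝ)
    (c : ℝ) (hF : Inv k F) (hsum : ∑ i, F i = (n k : ℝ) * c) :
    ∑ i, F i * g (i k) = c * ∑ x, g x := by
  rw [sum_resSum k]
  have hres : ∀ x, resSum k x (fun i => F i * g (i k)) = c * g x := by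
    intro x
    rw [resSum_mul_right]
    have h1 : (n k : ℝ) * resSum k x F = (n k : ℝ) * c := by
      rw [card_mul_resSum k F hF x, hsum]
    have h2 : resSum k x F = c :=
      mul_left_cancel₀ (by exact_mod_cast (hn k).ne') h1
    rw [h2, mul_comm]
  rw [Finset.sum_congr rfl (fun x _ => hres x), Finset.mul_sum]

end

section

variable {d : ℕ} {n : Fin d → ℕ} {ρ : Fin (d + 1) → ℕ}
variable (G : ∀ s : Fin d, Fin (ρ s.castSucc) → Fin (n s) → Fin (ρ s.succ) → ℝ)

lemma leftOrth_sum {p nn q : ℕ} {M : Fin p → Fin nn → Fin q → ℝ} (h : LeftOrth M)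
    (α α' : Fin q) :
    ∑ x : Fin nn, ∑ β : Fin p, M β x α * M β x α' = if α = α' then 1 else 0 := by
  have := congrFun (congrFun h α) α'
  rw [Matrix.mul_apply] at this
  rw [Matrix.one_apply] at this
  rw [← this, Fintype.sum_prod_type]
  apply Finset.sum_congr rfl
  intro x _
  apply Finset.sum_congr rfl
  intro β _
  rw [Matrix.transpose_apply]
  rfl

lemma Lmat_gram (hn : ∀ j, 0 < n j) (hρ0 : ρ 0 = 1) :
    ∀ (s : ℕ) (hs : s ≤ d), (∀ j : Fin d, j.val < s → LeftOrth (G j)) →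
    ∀ α α', ∑ i, Lmat G s hs i α * Lmat G s hs i α'
      = Nc n s * (if α = α' then 1 else 0)
  | 0, hs, _, α, α' => by
    have hr : ρ ⟨0, Nat.lt_succ_of_le hs⟩ = 1 := by
      have e0 : (⟨0, Nat.lt_succ_of_le hs⟩ : Fin (d+1)) = 0 := Fin.ext (by simp)
      rw [e0, hρ0]
    have hαα : α = α' := Fin.ext (by omega)
    subst hαα
    rw [if_pos rfl, mul_one, Nc_zero]
    show ∑ _i : Idx n, (1 : ℝ) * 1 = _
    simp
  | s + 1, hs, horth, α, α' => by
    have hsd : s < d := hs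
    have hs' : s ≤ d := Nat.le_of_succ_le hs
    have IH := Lmat_gram hn hρ0 s hs' (fun j hj => horth j (by omega))
    show ∑ i, (∑ β, Lmat G s hs' i β * G ⟨s, hsd⟩ β (i ⟨s, hsd⟩) α) *
        (∑ γ, Lmat G s hs' i γ * G ⟨s, hsd⟩ γ (i ⟨s, hsd⟩) α') = _
    have step1 : ∀ i : Idx n, (∑ β, Lmat G s hs' i β * G ⟨s, hsd⟩ β (i ⟨s, hsd⟩) α) *
        (∑ γ, Lmat G s hs' i γ * G ⟨s, hsd⟩ γ (i ⟨s, hsd⟩) α')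
        = ∑ β, ∑ γ, (Lmat G s hs' i β * Lmat G s hs' i γ) *
          (G ⟨s, hsd⟩ β (i ⟨s, hsd⟩) α * G ⟨s, hsd⟩ γ (i ⟨s, hsd⟩) α') := by
      intro i
      rw [Finset.sum_mul_sum]
      apply Finset.sum_congr rfl; intro β _
      apply Finset.sum_congr rfl; intro γ _
      ring
    rw [Finset.sum_congr rfl (fun i _ => step1 i)]
    rw [Finset.sum_comm]
    rw [Finset.sum_congr rfl (fun β _ => Finset.sum_comm)]
    have key : ∀ β, ∑ γ, ∑ i, (Lmat G s hs' i β * Lmat G s hs' i γ) *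
        (G ⟨s, hsd⟩ β (i ⟨s, hsd⟩) α * G ⟨s, hsd⟩ γ (i ⟨s, hsd⟩) α')
        = Nc n (s+1) * ∑ x, G ⟨s, hsd⟩ β x α * G ⟨s, hsd⟩ β x α' := by
      intro β
      have keyin : ∀ γ, ∑ i, (Lmat G s hs' i β * Lmat G s hs' i γ) *
          (G ⟨s, hsd⟩ β (i ⟨s, hsd⟩) α * G ⟨s, hsd⟩ γ (i ⟨s, hsd⟩) α')
          = (Nc n (s+1) * (if β = γ then 1 else 0)) *
            ∑ x, G ⟨s, hsd⟩ β x α * G ⟨s, hsd⟩ γ x α' := by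
        intro γ
        have hInv : Inv (⟨s, hsd⟩ : Fin d) (fun i => Lmat G s hs' i β * Lmat G s hs' i γ) := by
          intro i x
          exact congrArg₂ HMul.hMul (Lmat_inv G s hs' ⟨s, hsd⟩ (Nat.le_refl s) β i x)
            (Lmat_inv G s hs' ⟨s, hsd⟩ (Nat.le_refl s) γ i x)
        have hSum : ∑ i, Lmat G s hs' i β * Lmat G s hs' i γ
            = ((n ⟨s, hsd⟩ : ℝ)) * (Nc n (s+1) * (if β = γ then 1 else 0)) := by
          rw [IH β γ, Nc_succ s hsd, mul_assoc]
        exact sum_mul_fiber hn ⟨s, hsd⟩ (fun i => Lmat G s hs' i β * Lmat G s hs' i γ)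
          (fun x => G ⟨s, hsd⟩ β x α * G ⟨s, hsd⟩ γ x α')
          (Nc n (s+1) * (if β = γ then 1 else 0)) hInv hSum
      rw [Finset.sum_congr rfl (fun γ _ => keyin γ)]
      rw [Finset.sum_eq_single β]
      · rw [if_pos rfl, mul_one]
      · intro γ _ hγ
        rw [if_neg (Ne.symm hγ), mul_zero, zero_mul]
      · intro hβ
        exact absurd (Finset.mem_univ β) hβ
    rw [Finset.sum_congr rfl (fun β _ => key β), ← Finset.mul_sum, Finset.sum_comm]
    congr 1
    exact leftOrth_sum (horth ⟨s, hsd⟩ (Nat.lt_succ_self s)) α α'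
end

section

variable {d : ℕ} {n : Fin d → ℕ} {ρ : Fin (d + 1) → ℕ}


lemma rightOrth_sum {p nn q : ℕ} {M : Fin p → Fin nn → Fin q → ℝ} (h : RightOrth M)
    (α α' : Fin p) :
    ∑ x : Fin nn, ∑ β : Fin q, M α x β * M α' x β = if α = α' then 1 else 0 := by
  have := congrFun (congrFun h α) α'
  rw [Matrix.mul_apply] at this
  rw [Matrix.one_apply] at this
  rw [← this, Fintype.sum_prod_type]
  rfl

variable (G : ∀ s : Fin d, Fin (ρ s.castSucc) → Fin (n s) → Fin (ρ s.succ) → ℝ)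

lemma Rmat_gram (hn : ∀ j, 0 < n j) (hρd : ρ (Fin.last d) = 1) :
    ∀ (s : ℕ) (hs : s ≤ d), (∀ j : Fin d, s ≤ j.val → RightOrth (G j)) →
    ∀ α α', ∑ i, Rmat G s hs α i * Rmat G s hs α' i
      = Mc n s * (if α = α' then 1 else 0) := by
  intro s hs horth α α'
  by_cases h : s < d
  · have hs1 : s + 1 ≤ d := h
    have IH := Rmat_gram hn hρd (s + 1) hs1 (fun j hj => horth j (by omega))
    have expand : ∀ i : Idx n, Rmat G s hs α i * Rmat G s hs α' i
        = ∑ β, ∑ γ, (Rmat G (s+1) hs1 β i * Rmat G (s+1) hs1 γ i) *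
          (G ⟨s, h⟩ α (i ⟨s, h⟩) β * G ⟨s, h⟩ α' (i ⟨s, h⟩) γ) := by
      intro i
      rw [Rmat_lt G hs h, Rmat_lt G hs h, Finset.sum_mul_sum]
      apply Finset.sum_congr rfl; intro β _
      apply Finset.sum_congr rfl; intro γ _
      ring
    rw [Finset.sum_congr rfl (fun i _ => expand i)]
    rw [Finset.sum_comm]
    rw [Finset.sum_congr rfl (fun β _ => Finset.sum_comm)]
    have key : ∀ β, ∑ γ, ∑ i, (Rmat G (s+1) hs1 β i * Rmat G (s+1) hs1 γ i) *
        (G ⟨s, h⟩ α (i ⟨s, h⟩) β * G ⟨s, h⟩ α' (i ⟨s, h⟩) γ)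
        = Mc n s * ∑ x, G ⟨s, h⟩ α x β * G ⟨s, h⟩ α' x β := by
      intro β
      have keyin : ∀ γ, ∑ i, (Rmat G (s+1) hs1 β i * Rmat G (s+1) hs1 γ i) *
          (G ⟨s, h⟩ α (i ⟨s, h⟩) β * G ⟨s, h⟩ α' (i ⟨s, h⟩) γ)
          = (Mc n s * (if β = γ then 1 else 0)) * ∑ x, G ⟨s, h⟩ α x β * G ⟨s, h⟩ α' x γ := by
        intro γ
        have hInv : Inv (⟨s, h⟩ : Fin d)
            (fun i => Rmat G (s+1) hs1 β i * Rmat G (s+1) hs1 γ i) := by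
          intro i x
          exact congrArg₂ HMul.hMul
            (Rmat_inv_lt G (s+1) hs1 ⟨s, h⟩ (Nat.lt_succ_self s) β i x)
            (Rmat_inv_lt G (s+1) hs1 ⟨s, h⟩ (Nat.lt_succ_self s) γ i x)
        have hSum : ∑ i, Rmat G (s+1) hs1 β i * Rmat G (s+1) hs1 γ i
            = ((n ⟨s, h⟩ : ℝ)) * (Mc n s * (if β = γ then 1 else 0)) := by
          rw [IH β γ, Mc_succ s h, mul_assoc]
        exact sum_mul_fiber hn ⟨s, h⟩
          (fun i => Rmat G (s+1) hs1 β i * Rmat G (s+1) hs1 γ i)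
          (fun x => G ⟨s, h⟩ α x β * G ⟨s, h⟩ α' x γ)
          (Mc n s * (if β = γ then 1 else 0)) hInv hSum
      rw [Finset.sum_congr rfl (fun γ _ => keyin γ)]
      rw [Finset.sum_eq_single β]
      · rw [if_pos rfl, mul_one]
      · intro γ _ hγ
        rw [if_neg (Ne.symm hγ), mul_zero, zero_mul]
      · intro hβ
        exact absurd (Finset.mem_univ β) hβ
    rw [Finset.sum_congr rfl (fun β _ => key β), ← Finset.mul_sum, Finset.sum_comm]
    congr 1
    exact rightOrth_sum (horth ⟨s, h⟩ (Nat.le_refl s)) α α'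
  · have hsd : s = d := by omega
    subst hsd
    have hr : ρ ⟨s, Nat.lt_succ_of_le hs⟩ = 1 := hρd
    have hαα : α = α' := Fin.ext (by omega)
    subst hαα
    rw [if_pos rfl, mul_one, Mc_d]
    rw [Finset.sum_congr rfl (fun i _ => by rw [Rmat_last G hs h, mul_one])]
    simp
  termination_by s => d - s
end

section

variable {d : ℕ} {n : Fin d → ℕ} {ρ : Fin (d + 1) → ℕ}
variable (G : ∀ s : Fin d, Fin (ρ s.castSucc) → Fin (n s) → Fin (ρ s.succ) → ℝ)


lemma prod_if_split (s : ℕ) (h : s < d) (X : Fin d → ℝ) :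
    ∏ j : Fin d, (if s ≤ j.val then X j else 1)
      = X ⟨s, h⟩ * ∏ j : Fin d, (if s + 1 ≤ j.val then X j else 1) := by
  rw [← Finset.prod_erase_mul _ _ (Finset.mem_univ (⟨s, h⟩ : Fin d)),
      ← Finset.prod_erase_mul _ _ (Finset.mem_univ (⟨s, h⟩ : Fin d))]
  rw [if_pos (Nat.le_refl s), if_neg (Nat.not_succ_le_self s)]
  rw [mul_one, mul_comm]
  congr 1
  apply Finset.prod_congr rfl
  intro j hj
  have hjne : j ≠ ⟨s, h⟩ := (Finset.mem_erase.mp hj).1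
  have : j.val ≠ s := by intro hh; exact hjne (Fin.ext hh)
  by_cases h2 : s ≤ j.val
  · rw [if_pos h2, if_pos (by omega)]
  · rw [if_neg h2, if_neg (by omega)]

lemma Rmat_chain (i : Idx n) : ∀ (s : ℕ) (hs : s ≤ d) (f : ∀ j : Fin (d+1), Fin (ρ j))
    (α : Fin (ρ ⟨s, Nat.lt_succ_of_le hs⟩)),
    Rmat G s hs α i = ∑ c : (∀ j : Fin (d+1), Fin (ρ j)),
      if c ⟨s, Nat.lt_succ_of_le hs⟩ = α ∧ (∀ j : Fin (d+1), j.val < s → c j = f j) then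
        ∏ j : Fin d, (if s ≤ j.val then G j (c j.castSucc) (i j) (c j.succ) else 1)
      else 0 := by
  intro s hs f α
  by_cases h : s < d
  · rw [Rmat_lt G hs h]
    have IH : ∀ β, Rmat G (s+1) h β i = ∑ c : (∀ j : Fin (d+1), Fin (ρ j)),
        if c ⟨s+1, Nat.lt_succ_of_le h⟩ = β ∧ (∀ j : Fin (d+1), j.val < s + 1 →
            c j = Function.update f ⟨s, Nat.lt_succ_of_le hs⟩ α j) then
          ∏ j : Fin d, (if s + 1 ≤ j.val then G j (c j.castSucc) (i j) (c j.succ) else 1)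
        else 0 :=
      fun β => Rmat_chain i (s+1) h (Function.update f ⟨s, Nat.lt_succ_of_le hs⟩ α) β
    symm
    have collapse : ∀ c : (∀ j : Fin (d+1), Fin (ρ j)),
        (if c ⟨s, Nat.lt_succ_of_le hs⟩ = α ∧ (∀ j : Fin (d+1), j.val < s → c j = f j) then
          ∏ j : Fin d, (if s ≤ j.val then G j (c j.castSucc) (i j) (c j.succ) else 1) else 0)
        = ∑ β, if c ⟨s+1, Nat.lt_succ_of_le h⟩ = β then
            G ⟨s, h⟩ α (i ⟨s, h⟩) β *
            (if c ⟨s+1, Nat.lt_succ_of_le h⟩ = β ∧ (∀ j : Fin (d+1), j.val < s + 1 →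
                c j = Function.update f ⟨s, Nat.lt_succ_of_le hs⟩ α j) then
              ∏ j : Fin d, (if s + 1 ≤ j.val then G j (c j.castSucc) (i j) (c j.succ) else 1)
            else 0)
          else 0 := by
      intro c
      rw [Finset.sum_ite_eq Finset.univ (c ⟨s+1, Nat.lt_succ_of_le h⟩), if_pos (Finset.mem_univ _)]
      by_cases h2 : c ⟨s, Nat.lt_succ_of_le hs⟩ = α ∧ (∀ j : Fin (d+1), j.val < s → c j = f j)
      · have hcond : c ⟨s+1, Nat.lt_succ_of_le h⟩ = c ⟨s+1, Nat.lt_succ_of_le h⟩ ∧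
            (∀ j : Fin (d+1), j.val < s + 1 →
              c j = Function.update f ⟨s, Nat.lt_succ_of_le hs⟩ α j) := by
          refine ⟨rfl, ?_⟩
          intro j hj
          by_cases hjs : j.val < s
          · rw [Function.update_of_ne (Fin.ne_of_val_ne (show _ ≠ s by omega)), h2.2 j hjs]
          · have : j = ⟨s, Nat.lt_succ_of_le hs⟩ := Fin.ext (show j.val = s by omega)
            subst this
            rw [Function.update_self]
            exact h2.1
        rw [if_pos h2, if_pos hcond]
        rw [prod_if_split s h (fun j => G j (c j.castSucc) (i j) (c j.succ))]
        have e1 : c (Fin.castSucc ⟨s, h⟩) = α := h2.1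
        rw [e1]
        rfl
      · have hcond : ¬ (c ⟨s+1, Nat.lt_succ_of_le h⟩ = c ⟨s+1, Nat.lt_succ_of_le h⟩ ∧
            (∀ j : Fin (d+1), j.val < s + 1 →
              c j = Function.update f ⟨s, Nat.lt_succ_of_le hs⟩ α j)) := by
          intro hcon
          apply h2
          constructor
          · have := hcon.2 ⟨s, Nat.lt_succ_of_le hs⟩ (Nat.lt_succ_self s)
            rwa [Function.update_self] at this
          · intro j hj
            have := hcon.2 j (by omega)
            rwa [Function.update_of_ne (Fin.ne_of_val_ne (show _ ≠ s by omega))] at this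
        rw [if_neg h2, if_neg hcond, mul_zero]
    rw [Finset.sum_congr rfl (fun c _ => collapse c), Finset.sum_comm]
    apply Finset.sum_congr rfl
    intro β _
    rw [IH β, Finset.mul_sum]
    apply Finset.sum_congr rfl
    intro c _
    by_cases h1 : c ⟨s+1, Nat.lt_succ_of_le h⟩ = β
    · rw [if_pos h1]
    · rw [if_neg h1, if_neg (fun hcon => h1 hcon.1), mul_zero]
  · have hsd : s = d := by omega
    rw [Rmat_last G hs h]
    symm
    set c₀ : ∀ j : Fin (d+1), Fin (ρ j) := Function.update f ⟨s, Nat.lt_succ_of_le hs⟩ α with hc₀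
    rw [Finset.sum_eq_single c₀]
    · have hcond : c₀ ⟨s, Nat.lt_succ_of_le hs⟩ = α ∧
          (∀ j : Fin (d+1), j.val < s → c₀ j = f j) := by
        constructor
        · exact Function.update_self _ _ _
        · intro j hj
          exact Function.update_of_ne (Fin.ne_of_val_ne (show _ ≠ s by omega)) _ _
      rw [if_pos hcond]
      apply Finset.prod_eq_one
      intro j _
      rw [if_neg (by omega)]
    · intro c _ hc
      rw [if_neg]
      intro hcon
      apply hc
      funext j
      by_cases hj : j.val < s
      · rw [show c₀ j = f j from Function.update_of_ne (Fin.ne_of_val_ne (show _ ≠ s by omega)) _ _, hcon.2 j hj]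
      · have hje : j = ⟨s, Nat.lt_succ_of_le hs⟩ := Fin.ext (show j.val = s by omega)
        subst hje
        rw [show c₀ _ = α from Function.update_self _ _ _]
        exact hcon.1
    · intro hcon
      exact absurd (Finset.mem_univ c₀) hcon
  termination_by s => d - s
end

section

variable {d : ℕ} {n : Fin d → ℕ} {ρ : Fin (d + 1) → ℕ}
variable (G : ∀ s : Fin d, Fin (ρ s.castSucc) → Fin (n s) → Fin (ρ s.succ) → ℝ)

lemma sum_Rmat_zero (hρ : ∀ j : Fin (d+1), 0 < ρ j) (i : Idx n) :
    ttEval n ρ G i = ∑ α : Fin (ρ ⟨0, Nat.lt_succ_of_le (Nat.zero_le d)⟩),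
      Rmat G 0 (Nat.zero_le d) α i := by
  have hch := fun α => Rmat_chain G i 0 (Nat.zero_le d) (fun j => ⟨0, hρ j⟩) α
  rw [Finset.sum_congr rfl (fun α _ => hch α), Finset.sum_comm]
  unfold ttEval
  apply Finset.sum_congr rfl
  intro c _
  have e1 : ∀ α, (if c ⟨0, Nat.lt_succ_of_le (Nat.zero_le d)⟩ = α ∧
      (∀ j : Fin (d+1), j.val < 0 → c j = ⟨0, hρ j⟩) then
        ∏ j : Fin d, (if 0 ≤ j.val then G j (c j.castSucc) (i j) (c j.succ) else 1)
      else 0)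
      = (if c ⟨0, Nat.lt_succ_of_le (Nat.zero_le d)⟩ = α then
          ∏ j : Fin d, G j (c j.castSucc) (i j) (c j.succ) else 0) := by
    intro α
    rw [if_congr (and_iff_left (fun j hj => absurd hj (by omega)))
      (Finset.prod_congr rfl (fun j _ => if_pos (Nat.zero_le _))) rfl]
  rw [Finset.sum_congr rfl (fun α _ => e1 α)]
  rw [Finset.sum_ite_eq Finset.univ (c ⟨0, Nat.lt_succ_of_le (Nat.zero_le d)⟩), if_pos (Finset.mem_univ _)]

lemma LR_contract (hρ : ∀ j : Fin (d+1), 0 < ρ j) :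
    ∀ (s : ℕ) (hs : s ≤ d) (i : Idx n),
    ∑ α, Lmat G s hs i α * Rmat G s hs α i = ttEval n ρ G i
  | 0, hs, i => by
    rw [sum_Rmat_zero G hρ i]
    apply Finset.sum_congr rfl
    intro α _
    show (1 : ℝ) * _ = _
    rw [one_mul]
  | s+1, hs, i => by
    have hsd : s < d := hs
    have hs' : s ≤ d := Nat.le_of_succ_le hs
    rw [← LR_contract hρ s hs' i]
    show ∑ α, (∑ β, Lmat G s hs' i β * G ⟨s, hsd⟩ β (i ⟨s, hsd⟩) α) *
      Rmat G (s+1) hsd α i = _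
    have e1 : ∀ α, (∑ β, Lmat G s hs' i β * G ⟨s, hsd⟩ β (i ⟨s, hsd⟩) α) *
        Rmat G (s+1) hsd α i
        = ∑ β, Lmat G s hs' i β * (G ⟨s, hsd⟩ β (i ⟨s, hsd⟩) α * Rmat G (s+1) hsd α i) := by
      intro α
      rw [Finset.sum_mul]
      apply Finset.sum_congr rfl
      intro β _
      ring
    rw [Finset.sum_congr rfl (fun α _ => e1 α), Finset.sum_comm]
    apply Finset.sum_congr rfl
    intro β _
    rw [← Finset.mul_sum, ← Rmat_lt G hs' hsd β i]

lemma LR_mix (hρ : ∀ j : Fin (d+1), 0 < ρ j) (s : ℕ) (hs : s ≤ d) (i i' : Idx n) :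
    ∑ α, Lmat G s hs i α * Rmat G s hs α i'
      = ttEval n ρ G (fun j => if j.val < s then i j else i' j) := by
  have h1 : ∀ α, Lmat G s hs i α
      = Lmat G s hs (fun j => if j.val < s then i j else i' j) α :=
    Lmat_congr G s hs i _ (fun j hj => (if_pos hj).symm)
  have h2 : ∀ α, Rmat G s hs α i'
      = Rmat G s hs α (fun j => if j.val < s then i j else i' j) :=
    Rmat_congr G s hs i' _ (fun j hj => (if_neg (show ¬ j.val < s by omega)).symm)
  rw [Finset.sum_congr rfl (fun α _ => by rw [h1 α, h2 α])]
  exact LR_contract G hρ s hs _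
end

section

variable {d : ℕ} {n : Fin d → ℕ} {ρ : Fin (d + 1) → ℕ}


lemma rank_col_inj {γ : Type} [Fintype γ] {c : ℕ} (M : Matrix γ (Fin c) ℝ)
    (h : M.rank = c) : Function.Injective M.mulVecLin := by
  rw [← LinearMap.ker_eq_bot]
  have h2 := LinearMap.finrank_range_add_finrank_ker M.mulVecLin
  rw [Matrix.rank] at h
  have h3 : Module.finrank ℝ (LinearMap.ker M.mulVecLin) = 0 := by
    have hd : Module.finrank ℝ (Fin c → ℝ) = c := by simp
    omega
  exact (Submodule.finrank_eq_zero).mp h3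

lemma rank_row_surj {δ : Type} [Fintype δ] [DecidableEq δ] {r : ℕ} (M : Matrix (Fin r) δ ℝ)
    (h : M.rank = r) : Function.Surjective M.mulVecLin := by
  rw [← LinearMap.range_eq_top]
  apply Submodule.eq_top_of_finrank_eq
  rw [Matrix.rank] at h
  simpa using h

variable (G : ∀ s : Fin d, Fin (ρ s.castSucc) → Fin (n s) → Fin (ρ s.succ) → ℝ)

lemma minimal_pos (hmin : MinimalTT G) (hρ0 : ρ 0 = 1) :
    (∀ j : Fin d, 0 < n j) ∧ (∀ j : Fin (d+1), 0 < ρ j) := by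
  have step : ∀ (s : ℕ) (h : s < d), 0 < ρ ⟨s, Nat.lt_succ_of_le h.le⟩ →
      0 < n ⟨s, h⟩ ∧ 0 < ρ ⟨s+1, Nat.succ_lt_succ h⟩ := by
    intro s h hpos
    have h1 := (hmin ⟨s, h⟩).2
    have h2 := Matrix.rank_le_card_width (rightUnf (G ⟨s, h⟩))
    rw [h1] at h2
    have h3 : Fintype.card (Fin (n ⟨s, h⟩) × Fin (ρ (Fin.succ ⟨s, h⟩)))
        = n ⟨s, h⟩ * ρ ⟨s+1, Nat.succ_lt_succ h⟩ := by
      simp [Fintype.card_prod]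
    rw [h3] at h2
    have h4 : ρ ⟨s, Nat.lt_succ_of_le h.le⟩ ≤ n ⟨s, h⟩ * ρ ⟨s+1, Nat.succ_lt_succ h⟩ := h2
    rcases Nat.eq_zero_or_pos (n ⟨s, h⟩) with h0 | h0
    · rw [h0, Nat.zero_mul] at h4; omega
    · rcases Nat.eq_zero_or_pos (ρ ⟨s+1, Nat.succ_lt_succ h⟩) with h1' | h1'
      · rw [h1', Nat.mul_zero] at h4; omega
      · exact ⟨h0, h1'⟩
  have all : ∀ (s : ℕ) (h : s ≤ d), 0 < ρ ⟨s, Nat.lt_succ_of_le h⟩ := by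
    intro s
    induction s with
    | zero => intro h
              have e0 : (⟨0, Nat.lt_succ_of_le h⟩ : Fin (d+1)) = 0 := Fin.ext (by simp)
              rw [e0, hρ0]; omega
    | succ m ih => intro h
                   exact (step m h (ih (Nat.le_of_succ_le h))).2
  constructor
  · intro j
    have := (step j.val j.isLt (all j.val j.isLt.le)).1
    simpa using this
  · intro j
    have := all j.val (Nat.lt_succ_iff.mp j.isLt)
    simpa using this

lemma Lmat_update (s : ℕ) (hs : s ≤ d) (k : Fin d) (hk : s ≤ k.val)
    (β : Fin (ρ ⟨s, Nat.lt_succ_of_le hs⟩)) (i : Idx n) (x : Fin (n k)) :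
    Lmat G s hs (Function.update i k x) β = Lmat G s hs i β :=
  Lmat_inv G s hs k hk β i x

lemma Rmat_update (s : ℕ) (hs : s ≤ d) (k : Fin d) (hk : k.val < s)
    (α : Fin (ρ ⟨s, Nat.lt_succ_of_le hs⟩)) (i : Idx n) (x : Fin (n k)) :
    Rmat G s hs α (Function.update i k x) = Rmat G s hs α i :=
  Rmat_inv_lt G s hs k hk α i x

lemma Lmat_inj (hmin : MinimalTT G) (hρ0 : ρ 0 = 1) (hn : ∀ j, 0 < n j) :
    ∀ (s : ℕ) (hs : s ≤ d) (v : Fin (ρ ⟨s, Nat.lt_succ_of_le hs⟩) → ℝ),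
    (∀ i, ∑ α, Lmat G s hs i α * v α = 0) → v = 0
  | 0, hs, v, hv => by
    have i0 : Idx n := fun j => ⟨0, hn j⟩
    have hr : ρ ⟨0, Nat.lt_succ_of_le hs⟩ = 1 := by
      have e0 : (⟨0, Nat.lt_succ_of_le hs⟩ : Fin (d+1)) = 0 := Fin.ext (by simp)
      rw [e0, hρ0]
    have h0 : ∑ α, (1 : ℝ) * v α = 0 := hv i0
    funext α
    have huniq : ∀ α' : Fin (ρ ⟨0, Nat.lt_succ_of_le hs⟩), α' = α := by
      intro α'
      have h1 := α'.isLt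
      have h2 := α.isLt
      exact Fin.ext (by omega)
    have heq : ∑ α', (1 : ℝ) * v α' = v α := by
      calc ∑ α', (1 : ℝ) * v α' = ∑ _α' : Fin (ρ ⟨0, Nat.lt_succ_of_le hs⟩), v α := by
            apply Finset.sum_congr rfl
            intro α' _
            rw [one_mul, huniq α']
        _ = v α := by
            rw [Finset.sum_const, Finset.card_univ, Fintype.card_fin, hr, one_smul]
    rw [heq] at h0
    exact h0
  | s+1, hs, v, hv => by
    have hsd : s < d := hs
    have hs' : s ≤ d := Nat.le_of_succ_le hs
    set k : Fin d := ⟨s, hsd⟩ with hkdef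
    have hw : ∀ x : Fin (n k), (fun β => ∑ α, G k β x α * v α) = 0 := by
      intro x
      apply Lmat_inj hmin hρ0 hn s hs'
      intro i
      have h1 := hv (Function.update i k x)
      have h2 : ∀ α, Lmat G (s+1) hs (Function.update i k x) α
          = ∑ β, Lmat G s hs' i β * G k β x α := by
        intro α
        show ∑ β, Lmat G s hs' (Function.update i k x) β *
          G k β ((Function.update i k x) k) α = _
        apply Finset.sum_congr rfl
        intro β _
        rw [Lmat_update G s hs' k (Nat.le_refl s) β i x, Function.update_self]
      rw [Finset.sum_congr rfl (fun α _ => by rw [h2 α, Finset.sum_mul])] at h1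
      rw [Finset.sum_comm] at h1
      show ∑ β, Lmat G s hs' i β * (∑ α, G k β x α * v α) = 0
      rw [← h1]
      apply Finset.sum_congr rfl
      intro β _
      rw [Finset.mul_sum]
      apply Finset.sum_congr rfl
      intro α _
      ring
    have hinj := rank_col_inj (leftUnf (G k)) (hmin k).1
    have hmv : (leftUnf (G k)).mulVec v = 0 := by
      funext p
      show ∑ α, leftUnf (G k) p α * v α = 0
      have := congrFun (hw p.1) p.2
      exact this
    have : (leftUnf (G k)).mulVecLin v = (leftUnf (G k)).mulVecLin 0 := by
      rw [Matrix.mulVecLin_apply, Matrix.mulVecLin_apply, hmv, Matrix.mulVec_zero]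
    exact hinj this
end

section

variable {d : ℕ} {n : Fin d → ℕ} {ρ : Fin (d + 1) → ℕ}
variable (G : ∀ s : Fin d, Fin (ρ s.castSucc) → Fin (n s) → Fin (ρ s.succ) → ℝ)

lemma resSum_sum {γ : Type} [Fintype γ] (k : Fin d) (x : Fin (n k)) (f : γ → Idx n → ℝ) :
    resSum k x (fun i => ∑ b : γ, f b i) = ∑ b : γ, resSum k x (f b) := by
  unfold resSum
  rw [Finset.sum_comm]

lemma resSum_congr (k : Fin d) (x : Fin (n k)) (f g : Idx n → ℝ)
    (h : ∀ i : Idx n, i k = x → f i = g i) : resSum k x f = resSum k x g := by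
  unfold resSum
  apply Finset.sum_congr rfl
  intro r _
  exact h _ (symm_apply_at k x r)

lemma resSum_const_mul (k : Fin d) (x : Fin (n k)) (c : ℝ) (f : Idx n → ℝ) :
    resSum k x (fun i => c * f i) = c * resSum k x f := by
  unfold resSum
  rw [Finset.mul_sum]

lemma Rmat_surj (hmin : MinimalTT G) (hρd : ρ (Fin.last d) = 1) (hn : ∀ j, 0 < n j) :
    ∀ (s : ℕ) (hs : s ≤ d) (w : Fin (ρ ⟨s, Nat.lt_succ_of_le hs⟩) → ℝ),
    ∃ v : Idx n → ℝ, (∀ k : Fin d, k.val < s → Inv k v) ∧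
      (∀ α, ∑ i, Rmat G s hs α i * v i = w α) := by
  intro s hs w
  by_cases h : s < d
  · have hs1 : s + 1 ≤ d := h
    have hnk0 : ((n ⟨s, h⟩ : ℝ)) ≠ 0 := by
      exact_mod_cast (hn ⟨s, h⟩).ne'
    obtain ⟨u, hu⟩ := rank_row_surj (rightUnf (G ⟨s, h⟩)) (hmin ⟨s, h⟩).2
      (fun α => (n ⟨s, h⟩ : ℝ) * w α)
    have hu' : ∀ α, ∑ p : Fin (n ⟨s, h⟩) × Fin (ρ (Fin.succ ⟨s, h⟩)),
        G ⟨s, h⟩ α p.1 p.2 * u p = (n ⟨s, h⟩ : ℝ) * w α := by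
      intro α
      have h1 := congrFun hu α
      rw [Matrix.mulVecLin_apply] at h1
      exact h1
    choose vx hvx1 hvx2 using fun x : Fin (n ⟨s, h⟩) =>
      Rmat_surj hmin hρd hn (s+1) hs1 (fun β => u (x, β))
    refine ⟨fun i => vx (i ⟨s, h⟩) i, ?_, ?_⟩
    · intro k' hk' i y
      show vx ((Function.update i k' y) ⟨s, h⟩) (Function.update i k' y) = vx (i ⟨s, h⟩) i
      have hne : (⟨s, h⟩ : Fin d) ≠ k' := Fin.ne_of_val_ne (show s ≠ k'.val by omega)
      rw [Function.update_of_ne hne]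
      exact hvx1 (i ⟨s, h⟩) k' (by omega) i y
    · intro α
      rw [sum_resSum ⟨s, h⟩]
      have hx : ∀ x : Fin (n ⟨s, h⟩),
          resSum ⟨s, h⟩ x (fun i => Rmat G s hs α i * vx (i ⟨s, h⟩) i)
          = (∑ β, G ⟨s, h⟩ α x β * u (x, β)) / (n ⟨s, h⟩ : ℝ) := by
        intro x
        rw [resSum_congr ⟨s, h⟩ x _
          (fun i => ∑ β, G ⟨s, h⟩ α x β * (Rmat G (s+1) hs1 β i * vx x i)) ?agree]
        case agree =>
          intro i hik
          rw [Rmat_lt G hs h, hik, Finset.sum_mul]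
          apply Finset.sum_congr rfl
          intro β _
          ring
        rw [resSum_sum]
        have hb : ∀ β, resSum ⟨s, h⟩ x (fun i => G ⟨s, h⟩ α x β * (Rmat G (s+1) hs1 β i * vx x i))
            = G ⟨s, h⟩ α x β * (u (x, β) / (n ⟨s, h⟩ : ℝ)) := by
          intro β
          rw [resSum_const_mul]
          congr 1
          have hInv : Inv (⟨s, h⟩ : Fin d) (fun i => Rmat G (s+1) hs1 β i * vx x i) := by
            intro i y
            exact congrArg₂ HMul.hMul
              (Rmat_update G (s+1) hs1 ⟨s, h⟩ (Nat.lt_succ_self s) β i y)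
              (hvx1 x ⟨s, h⟩ (Nat.lt_succ_self s) i y)
          have hc := card_mul_resSum ⟨s, h⟩ _ hInv x
          rw [hvx2 x β] at hc
          field_simp at hc ⊢
          linarith [hc]
        rw [Finset.sum_congr rfl (fun β _ => hb β)]
        rw [Finset.sum_div]
        apply Finset.sum_congr rfl
        intro β _
        rw [mul_div_assoc]
      rw [Finset.sum_congr rfl (fun x _ => hx x), ← Finset.sum_div]
      have hps : (∑ x : Fin (n ⟨s, h⟩), ∑ β, G ⟨s, h⟩ α x β * u (x, β))
          = ∑ p : Fin (n ⟨s, h⟩) × Fin (ρ (Fin.succ ⟨s, h⟩)), G ⟨s, h⟩ α p.1 p.2 * u p :=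
        (Fintype.sum_prod_type (f := fun p => G ⟨s, h⟩ α p.1 p.2 * u p)).symm
      rw [hps, hu']
      rw [mul_comm, mul_div_assoc, div_self hnk0, mul_one]
  · have hsd : s = d := by omega
    have hr : ρ ⟨s, Nat.lt_succ_of_le hs⟩ = 1 := by
      rw [show (⟨s, Nat.lt_succ_of_le hs⟩ : Fin (d+1)) = Fin.last d from Fin.ext (by simp [hsd])]
      exact hρd
    have hcard : (0 : ℝ) < (Fintype.card (Idx n) : ℝ) := by
      have : Nonempty (Idx n) := ⟨fun j => ⟨0, hn j⟩⟩
      exact_mod_cast Fintype.card_pos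
    set α₀ : Fin (ρ ⟨s, Nat.lt_succ_of_le hs⟩) := ⟨0, by omega⟩ with hα₀
    refine ⟨fun _ => w α₀ / (Fintype.card (Idx n) : ℝ), fun k hk i y => rfl, ?_⟩
    intro α
    have hα : α = α₀ := by
      have h1 := α.isLt
      exact Fin.ext (by omega)
    rw [Finset.sum_congr rfl (fun i _ => by rw [Rmat_last G hs h, one_mul])]
    rw [Finset.sum_const, Finset.card_univ, nsmul_eq_mul, hα]
    rw [mul_comm, div_mul_cancel₀ _ (ne_of_gt hcard)]
  termination_by s => d - s
end

section

variable {d : ℕ} {n : Fin d → ℕ} {ρ : Fin (d + 1) → ℕ}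
variable (G : ∀ s : Fin d, Fin (ρ s.castSucc) → Fin (n s) → Fin (ρ s.succ) → ℝ)

lemma Rmat_inj (hmin : MinimalTT G) (hρd : ρ (Fin.last d) = 1) (hn : ∀ j, 0 < n j) :
    ∀ (s : ℕ) (hs : s ≤ d) (v : Fin (ρ ⟨s, Nat.lt_succ_of_le hs⟩) → ℝ),
    (∀ i, ∑ α, v α * Rmat G s hs α i = 0) → v = 0 := by
  intro s hs v hv
  by_cases h : s < d
  · have hs1 : s + 1 ≤ d := h
    have hw : ∀ x : Fin (n ⟨s, h⟩), (fun β => ∑ α, v α * G ⟨s, h⟩ α x β) = 0 := by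
      intro x
      apply Rmat_inj hmin hρd hn (s+1) hs1
      intro i
      have h1 := hv (Function.update i ⟨s, h⟩ x)
      have h2 : ∀ α, Rmat G s hs α (Function.update i ⟨s, h⟩ x)
          = ∑ β, G ⟨s, h⟩ α x β * Rmat G (s+1) hs1 β i := by
        intro α
        rw [Rmat_lt G hs h, Function.update_self]
        apply Finset.sum_congr rfl
        intro β _
        rw [Rmat_update G (s+1) hs1 ⟨s, h⟩ (Nat.lt_succ_self s) β i x]
      rw [Finset.sum_congr rfl (fun α _ => by rw [h2 α, Finset.mul_sum])] at h1
      rw [Finset.sum_comm] at h1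
      show ∑ β, (∑ α, v α * G ⟨s, h⟩ α x β) * Rmat G (s+1) hs1 β i = 0
      rw [← h1]
      apply Finset.sum_congr rfl
      intro β _
      rw [Finset.sum_mul]
      apply Finset.sum_congr rfl
      intro α _
      ring
    have hinj := rank_col_inj ((rightUnf (G ⟨s, h⟩))ᵀ)
      (by rw [Matrix.rank_transpose]; exact (hmin ⟨s, h⟩).2)
    have hmv : ((rightUnf (G ⟨s, h⟩))ᵀ).mulVec v = 0 := by
      funext p
      show ∑ α, (rightUnf (G ⟨s, h⟩))ᵀ p α * v α = 0
      have h3 := congrFun (hw p.1) p.2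
      simp only [Pi.zero_apply] at h3
      rw [← h3]
      apply Finset.sum_congr rfl
      intro α _
      rw [mul_comm]
      rfl
    apply hinj
    rw [Matrix.mulVecLin_apply, Matrix.mulVecLin_apply, hmv, Matrix.mulVec_zero]
  · have hsd : s = d := by omega
    have hr : ρ ⟨s, Nat.lt_succ_of_le hs⟩ = 1 := by
      rw [show (⟨s, Nat.lt_succ_of_le hs⟩ : Fin (d+1)) = Fin.last d from Fin.ext (by simp [hsd])]
      exact hρd
    have i0 : Idx n := fun j => ⟨0, hn j⟩
    have h0 := hv i0
    rw [Finset.sum_congr rfl (fun α _ => by rw [Rmat_last G hs h, mul_one])] at h0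
    funext α
    have huniq : ∀ α' : Fin (ρ ⟨s, Nat.lt_succ_of_le hs⟩), α' = α := by
      intro α'
      have h1 := α'.isLt
      have h2 := α.isLt
      exact Fin.ext (by omega)
    have heq : ∑ α', v α' = v α := by
      calc ∑ α', v α' = ∑ _α' : Fin (ρ ⟨s, Nat.lt_succ_of_le hs⟩), v α := by
            apply Finset.sum_congr rfl
            intro α' _
            rw [huniq α']
        _ = v α := by
            rw [Finset.sum_const, Finset.card_univ, Fintype.card_fin, hr, one_smul]
    rw [heq] at h0
    exact h0
  termination_by s => d - s

lemma Lmat_surj (hmin : MinimalTT G) (hρ0 : ρ 0 = 1) (hn : ∀ j, 0 < n j) :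
    ∀ (s : ℕ) (hs : s ≤ d) (w : Fin (ρ ⟨s, Nat.lt_succ_of_le hs⟩) → ℝ),
    ∃ v : Idx n → ℝ, (∀ k : Fin d, s ≤ k.val → Inv k v) ∧
      (∀ α, ∑ i, Lmat G s hs i α * v i = w α)
  | 0, hs, w => by
    have hr : ρ ⟨0, Nat.lt_succ_of_le hs⟩ = 1 := by
      have e0 : (⟨0, Nat.lt_succ_of_le hs⟩ : Fin (d+1)) = 0 := Fin.ext (by simp)
      rw [e0, hρ0]
    have hcard : (0 : ℝ) < (Fintype.card (Idx n) : ℝ) := by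
      have : Nonempty (Idx n) := ⟨fun j => ⟨0, hn j⟩⟩
      exact_mod_cast Fintype.card_pos
    set α₀ : Fin (ρ ⟨0, Nat.lt_succ_of_le hs⟩) := ⟨0, by omega⟩ with hα₀
    refine ⟨fun _ => w α₀ / (Fintype.card (Idx n) : ℝ), fun k _ i y => rfl, ?_⟩
    intro α
    have hα : α = α₀ := by
      have h1 := α.isLt
      exact Fin.ext (by omega)
    have hone : ∀ i : Idx n, Lmat G 0 hs i α * (w α₀ / (Fintype.card (Idx n) : ℝ))
        = w α₀ / (Fintype.card (Idx n) : ℝ) := fun i => one_mul _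
    rw [Finset.sum_congr rfl (fun i _ => hone i)]
    rw [Finset.sum_const, Finset.card_univ, nsmul_eq_mul, hα]
    rw [mul_comm, div_mul_cancel₀ _ (ne_of_gt hcard)]
  | s+1, hs, w => by
    have hsd : s < d := hs
    have hs' : s ≤ d := Nat.le_of_succ_le hs
    have hnk0 : ((n ⟨s, hsd⟩ : ℝ)) ≠ 0 := by
      exact_mod_cast (hn ⟨s, hsd⟩).ne'
    obtain ⟨u, hu⟩ := rank_row_surj ((leftUnf (G ⟨s, hsd⟩))ᵀ)
      (by rw [Matrix.rank_transpose]; exact (hmin ⟨s, hsd⟩).1)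
      (fun α => (n ⟨s, hsd⟩ : ℝ) * w α)
    have hu' : ∀ α, ∑ p : Fin (n ⟨s, hsd⟩) × Fin (ρ (Fin.castSucc ⟨s, hsd⟩)),
        G ⟨s, hsd⟩ p.2 p.1 α * u p = (n ⟨s, hsd⟩ : ℝ) * w α := by
      intro α
      have h1 := congrFun hu α
      rw [Matrix.mulVecLin_apply] at h1
      exact h1
    choose vx hvx1 hvx2 using fun x : Fin (n ⟨s, hsd⟩) =>
      Lmat_surj hmin hρ0 hn s hs' (fun β => u (x, β))
    refine ⟨fun i => vx (i ⟨s, hsd⟩) i, ?_, ?_⟩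
    · intro k' hk' i y
      show vx ((Function.update i k' y) ⟨s, hsd⟩) (Function.update i k' y) = vx (i ⟨s, hsd⟩) i
      have hne : (⟨s, hsd⟩ : Fin d) ≠ k' := Fin.ne_of_val_ne (show s ≠ k'.val by omega)
      rw [Function.update_of_ne hne]
      exact hvx1 (i ⟨s, hsd⟩) k' (by omega) i y
    · intro α
      rw [sum_resSum ⟨s, hsd⟩]
      have hx : ∀ x : Fin (n ⟨s, hsd⟩),
          resSum ⟨s, hsd⟩ x (fun i => Lmat G (s+1) hs i α * vx (i ⟨s, hsd⟩) i)
          = (∑ β, G ⟨s, hsd⟩ β x α * u (x, β)) / (n ⟨s, hsd⟩ : ℝ) := by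
        intro x
        rw [resSum_congr ⟨s, hsd⟩ x _
          (fun i => ∑ β, G ⟨s, hsd⟩ β x α * (Lmat G s hs' i β * vx x i)) ?agree]
        case agree =>
          intro i hik
          show (∑ β, Lmat G s hs' i β * G ⟨s, hsd⟩ β (i ⟨s, hsd⟩) α) * vx (i ⟨s, hsd⟩) i = _
          rw [hik, Finset.sum_mul]
          apply Finset.sum_congr rfl
          intro β _
          ring
        rw [resSum_sum]
        have hb : ∀ β, resSum ⟨s, hsd⟩ x
            (fun i => G ⟨s, hsd⟩ β x α * (Lmat G s hs' i β * vx x i))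
            = G ⟨s, hsd⟩ β x α * (u (x, β) / (n ⟨s, hsd⟩ : ℝ)) := by
          intro β
          rw [resSum_const_mul]
          congr 1
          have hInv : Inv (⟨s, hsd⟩ : Fin d) (fun i => Lmat G s hs' i β * vx x i) := by
            intro i y
            exact congrArg₂ HMul.hMul
              (Lmat_update G s hs' ⟨s, hsd⟩ (Nat.le_refl s) β i y)
              (hvx1 x ⟨s, hsd⟩ (Nat.le_refl s) i y)
          have hc := card_mul_resSum ⟨s, hsd⟩ _ hInv x
          rw [hvx2 x β] at hc
          field_simp at hc ⊢
          linarith [hc]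
        rw [Finset.sum_congr rfl (fun β _ => hb β)]
        rw [Finset.sum_div]
        apply Finset.sum_congr rfl
        intro β _
        rw [mul_div_assoc]
      rw [Finset.sum_congr rfl (fun x _ => hx x), ← Finset.sum_div]
      have hps : (∑ x : Fin (n ⟨s, hsd⟩), ∑ β, G ⟨s, hsd⟩ β x α * u (x, β))
          = ∑ p : Fin (n ⟨s, hsd⟩) × Fin (ρ (Fin.castSucc ⟨s, hsd⟩)),
            G ⟨s, hsd⟩ p.2 p.1 α * u p :=
        (Fintype.sum_prod_type (f := fun p => G ⟨s, hsd⟩ p.2 p.1 α * u p)).symm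
      rw [hps, hu']
      rw [mul_comm, mul_div_assoc, div_self hnk0, mul_one]
end

section

variable {d : ℕ} {n : Fin d → ℕ} {ρ : Fin (d + 1) → ℕ}
variable (G : ∀ s : Fin d, Fin (ρ s.castSucc) → Fin (n s) → Fin (ρ s.succ) → ℝ)


lemma sum_mul_delta {m : ℕ} (g : Fin m → ℝ) (c : ℝ) (β : Fin m) :
    ∑ γ, g γ * (c * if β = γ then 1 else 0) = c * g β := by
  rw [Finset.sum_eq_single β]
  · rw [if_pos rfl, mul_one, mul_comm]
  · intro γ _ hγ
    rw [if_neg (Ne.symm hγ), mul_zero, mul_zero]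
  · intro hβ
    exact absurd (Finset.mem_univ β) hβ

lemma Lmat_extract (hn : ∀ j, 0 < n j) (hρ0 : ρ 0 = 1) (s : ℕ) (hsd : s < d)
    (horth : ∀ j : Fin d, j.val < s → LeftOrth (G j))
    (β : Fin (ρ ⟨s, Nat.lt_succ_of_le hsd.le⟩)) (x : Fin (n ⟨s, hsd⟩))
    (α : Fin (ρ ⟨s+1, Nat.succ_lt_succ hsd⟩)) :
    resSum ⟨s, hsd⟩ x (fun i => Lmat G s hsd.le i β * Lmat G (s+1) hsd i α)
      = Nc n (s+1) * G ⟨s, hsd⟩ β x α := by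
  have hnk0 : ((n ⟨s, hsd⟩ : ℝ)) ≠ 0 := by exact_mod_cast (hn ⟨s, hsd⟩).ne'
  rw [resSum_congr ⟨s, hsd⟩ x _
    (fun i => ∑ γ, G ⟨s, hsd⟩ γ x α * (Lmat G s hsd.le i β * Lmat G s hsd.le i γ)) ?agree]
  case agree =>
    intro i hik
    show Lmat G s hsd.le i β * (∑ γ, Lmat G s hsd.le i γ * G ⟨s, hsd⟩ γ (i ⟨s, hsd⟩) α) = _
    rw [hik, Finset.mul_sum]
    apply Finset.sum_congr rfl
    intro γ _
    ring
  rw [resSum_sum]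
  have hb : ∀ γ, resSum ⟨s, hsd⟩ x
      (fun i => G ⟨s, hsd⟩ γ x α * (Lmat G s hsd.le i β * Lmat G s hsd.le i γ))
      = G ⟨s, hsd⟩ γ x α * (Nc n (s+1) * (if β = γ then 1 else 0)) := by
    intro γ
    rw [resSum_const_mul]
    congr 1
    have hInv : Inv (⟨s, hsd⟩ : Fin d) (fun i => Lmat G s hsd.le i β * Lmat G s hsd.le i γ) := by
      intro i y
      exact congrArg₂ HMul.hMul (Lmat_update G s hsd.le ⟨s, hsd⟩ (Nat.le_refl s) β i y)
        (Lmat_update G s hsd.le ⟨s, hsd⟩ (Nat.le_refl s) γ i y)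
    have hc := card_mul_resSum ⟨s, hsd⟩ _ hInv x
    rw [Lmat_gram G hn hρ0 s hsd.le horth β γ, Nc_succ s hsd] at hc
    rw [mul_assoc] at hc
    exact mul_left_cancel₀ hnk0 hc
  rw [Finset.sum_congr rfl (fun γ _ => hb γ)]
  exact sum_mul_delta (fun γ => G ⟨s, hsd⟩ γ x α) (Nc n (s+1)) β

lemma Rmat_extract (hn : ∀ j, 0 < n j) (hρd : ρ (Fin.last d) = 1) (s : ℕ) (hsd : s < d)
    (horth : ∀ j : Fin d, s + 1 ≤ j.val → RightOrth (G j))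
    (β : Fin (ρ ⟨s, Nat.lt_succ_of_le hsd.le⟩)) (x : Fin (n ⟨s, hsd⟩))
    (α : Fin (ρ ⟨s+1, Nat.succ_lt_succ hsd⟩)) :
    resSum ⟨s, hsd⟩ x (fun i => Rmat G (s+1) hsd α i * Rmat G s hsd.le β i)
      = Mc n s * G ⟨s, hsd⟩ β x α := by
  have hnk0 : ((n ⟨s, hsd⟩ : ℝ)) ≠ 0 := by exact_mod_cast (hn ⟨s, hsd⟩).ne'
  rw [resSum_congr ⟨s, hsd⟩ x _
    (fun i => ∑ γ, G ⟨s, hsd⟩ β x γ * (Rmat G (s+1) hsd α i * Rmat G (s+1) hsd γ i)) ?agree]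
  case agree =>
    intro i hik
    rw [Rmat_lt G hsd.le hsd β i, hik, Finset.mul_sum]
    apply Finset.sum_congr rfl
    intro γ _
    ring
  rw [resSum_sum]
  have hb : ∀ γ, resSum ⟨s, hsd⟩ x
      (fun i => G ⟨s, hsd⟩ β x γ * (Rmat G (s+1) hsd α i * Rmat G (s+1) hsd γ i))
      = G ⟨s, hsd⟩ β x γ * (Mc n s * (if α = γ then 1 else 0)) := by
    intro γ
    rw [resSum_const_mul]
    congr 1
    have hInv : Inv (⟨s, hsd⟩ : Fin d) (fun i => Rmat G (s+1) hsd α i * Rmat G (s+1) hsd γ i) := by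
      intro i y
      exact congrArg₂ HMul.hMul (Rmat_update G (s+1) hsd ⟨s, hsd⟩ (Nat.lt_succ_self s) α i y)
        (Rmat_update G (s+1) hsd ⟨s, hsd⟩ (Nat.lt_succ_self s) γ i y)
    have hc := card_mul_resSum ⟨s, hsd⟩ _ hInv x
    rw [Rmat_gram G hn hρd (s+1) hsd (fun j hj => horth j (by omega)) α γ,
      Mc_succ s hsd, mul_assoc] at hc
    exact mul_left_cancel₀ hnk0 hc
  rw [Finset.sum_congr rfl (fun γ _ => hb γ)]
  exact sum_mul_delta (fun γ => G ⟨s, hsd⟩ β x γ) (Mc n s) α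
end

section

variable {d : ℕ} {n : Fin d → ℕ} {ρ : Fin (d + 1) → ℕ}
variable (A B : ∀ s : Fin d, Fin (ρ s.castSucc) → Fin (n s) → Fin (ρ s.succ) → ℝ)

lemma LR_mix_eq (hρ : ∀ j : Fin (d+1), 0 < ρ j)
    (heval : ttEval n ρ A = ttEval n ρ B) (s : ℕ) (hs : s ≤ d) (i i' : Idx n) :
    ∑ α, Lmat A s hs i α * Rmat A s hs α i' = ∑ α, Lmat B s hs i α * Rmat B s hs α i' := by
  rw [LR_mix A hρ s hs i i', LR_mix B hρ s hs i i', heval]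

lemma Lmat_col_le (hminA : MinimalTT A) (hρ : ∀ j : Fin (d+1), 0 < ρ j)
    (hρd : ρ (Fin.last d) = 1) (hn : ∀ j, 0 < n j)
    (heval : ttEval n ρ A = ttEval n ρ B) (s : ℕ) (hs : s ≤ d) :
    ∃ C : Matrix (Fin (ρ ⟨s, Nat.lt_succ_of_le hs⟩)) (Fin (ρ ⟨s, Nat.lt_succ_of_le hs⟩)) ℝ,
      ∀ i β, Lmat A s hs i β = ∑ γ, Lmat B s hs i γ * C γ β := by
  choose v hv1 hv2 using fun β : Fin (ρ ⟨s, Nat.lt_succ_of_le hs⟩) =>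
    Rmat_surj A hminA hρd hn s hs (Pi.single β 1)
  refine ⟨fun γ β => ∑ i', Rmat B s hs γ i' * v β i', ?_⟩
  intro i β
  have e1 : Lmat A s hs i β = ∑ α, Lmat A s hs i α * (Pi.single β 1 : _ → ℝ) α := by
    rw [Finset.sum_eq_single β]
    · rw [Pi.single_eq_same, mul_one]
    · intro γ _ hγ
      rw [Pi.single_eq_of_ne hγ, mul_zero]
    · intro hβ
      exact absurd (Finset.mem_univ β) hβ
  rw [e1]
  rw [Finset.sum_congr rfl (fun α _ => by rw [← hv2 β α, Finset.mul_sum])]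
  rw [Finset.sum_comm]
  rw [Finset.sum_congr rfl (fun i' _ => by
    rw [Finset.sum_congr rfl (fun α _ => (mul_assoc _ _ _).symm), ← Finset.sum_mul,
      LR_mix_eq A B hρ heval s hs i i', Finset.sum_mul])]
  rw [Finset.sum_comm]
  apply Finset.sum_congr rfl
  intro γ _
  rw [Finset.mul_sum]
  apply Finset.sum_congr rfl
  intro i' _
  ring

lemma Rmat_row_le (hminA : MinimalTT A) (hρ : ∀ j : Fin (d+1), 0 < ρ j)
    (hρ0 : ρ 0 = 1) (hn : ∀ j, 0 < n j)
    (heval : ttEval n ρ A = ttEval n ρ B) (s : ℕ) (hs : s ≤ d) :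
    ∃ C : Matrix (Fin (ρ ⟨s, Nat.lt_succ_of_le hs⟩)) (Fin (ρ ⟨s, Nat.lt_succ_of_le hs⟩)) ℝ,
      ∀ i α, Rmat A s hs α i = ∑ γ, C α γ * Rmat B s hs γ i := by
  choose v hv1 hv2 using fun β : Fin (ρ ⟨s, Nat.lt_succ_of_le hs⟩) =>
    Lmat_surj A hminA hρ0 hn s hs (Pi.single β 1)
  refine ⟨fun α γ => ∑ i', v α i' * Lmat B s hs i' γ, ?_⟩
  intro i α
  have e1 : Rmat A s hs α i = ∑ β, (Pi.single α 1 : _ → ℝ) β * Rmat A s hs β i := by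
    rw [Finset.sum_eq_single α]
    · rw [Pi.single_eq_same, one_mul]
    · intro γ _ hγ
      rw [Pi.single_eq_of_ne hγ, zero_mul]
    · intro hα
      exact absurd (Finset.mem_univ α) hα
  rw [e1]
  rw [Finset.sum_congr rfl (fun β _ => by rw [← hv2 α β, Finset.sum_mul])]
  rw [Finset.sum_comm]
  rw [Finset.sum_congr rfl (fun i' _ => by
    rw [Finset.sum_congr rfl (fun β _ => by
      rw [show Lmat A s hs i' β * v α i' * Rmat A s hs β i
        = v α i' * (Lmat A s hs i' β * Rmat A s hs β i) from by ring]),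
      ← Finset.mul_sum, LR_mix_eq A B hρ heval s hs i' i, Finset.mul_sum])]
  rw [Finset.sum_comm]
  apply Finset.sum_congr rfl
  intro γ _
  rw [Finset.sum_mul]
  apply Finset.sum_congr rfl
  intro i' _
  ring

lemma gauge_orth_left {m : ℕ} (LA LB : Idx n → Fin m → ℝ) (C : Matrix (Fin m) (Fin m) ℝ)
    (Nco : ℝ) (hN : Nco ≠ 0)
    (hC : ∀ i β, LA i β = ∑ γ, LB i γ * C γ β)
    (gramA : ∀ β β', ∑ i, LA i β * LA i β' = Nco * (if β = β' then 1 else 0))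
    (gramB : ∀ β β', ∑ i, LB i β * LB i β' = Nco * (if β = β' then 1 else 0)) :
    Cᵀ * C = 1 ∧ C * Cᵀ = 1 := by
  have key : ∀ β β', ∑ γ, C γ β * C γ β' = if β = β' then 1 else 0 := by
    intro β β'
    apply mul_left_cancel₀ hN
    rw [← gramA β β']
    have e1 : ∀ i, LA i β * LA i β'
        = ∑ γ, ∑ γ', (C γ β * C γ' β') * (LB i γ * LB i γ') := by
      intro i
      rw [hC i β, hC i β', Finset.sum_mul_sum]
      apply Finset.sum_congr rfl; intro γ _
      apply Finset.sum_congr rfl; intro γ' _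
      ring
    rw [Finset.sum_congr rfl (fun i _ => e1 i)]
    rw [Finset.sum_comm]
    rw [Finset.sum_congr rfl (fun γ _ => Finset.sum_comm)]
    have e2 : ∀ γ, ∑ γ', ∑ i, (C γ β * C γ' β') * (LB i γ * LB i γ')
        = Nco * (C γ β * C γ β') := by
      intro γ
      have e3 : ∀ γ', ∑ i, (C γ β * C γ' β') * (LB i γ * LB i γ')
          = (C γ β * C γ' β') * (Nco * (if γ = γ' then 1 else 0)) := by
        intro γ'
        rw [← Finset.mul_sum, gramB γ γ']
      rw [Finset.sum_congr rfl (fun γ' _ => e3 γ')]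
      have := sum_mul_delta (fun γ' => C γ β * C γ' β') Nco γ
      calc ∑ γ', C γ β * C γ' β' * (Nco * if γ = γ' then 1 else 0)
          = ∑ γ', (fun γ' => C γ β * C γ' β') γ' * (Nco * if γ = γ' then 1 else 0) := rfl
        _ = Nco * (C γ β * C γ β') := this
    rw [Finset.sum_congr rfl (fun γ _ => e2 γ), ← Finset.mul_sum]
  have h1 : Cᵀ * C = 1 := by
    ext β β'
    rw [Matrix.mul_apply, Matrix.one_apply]
    calc ∑ γ, Cᵀ β γ * C γ β' = ∑ γ, C γ β * C γ β' := rfl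
      _ = _ := key β β'
  exact ⟨h1, mul_eq_one_comm.mp h1⟩

lemma gauge_orth_right {m : ℕ} (RA RB : Fin m → Idx n → ℝ) (D : Matrix (Fin m) (Fin m) ℝ)
    (Nco : ℝ) (hN : Nco ≠ 0)
    (hD : ∀ i α, RA α i = ∑ γ, D α γ * RB γ i)
    (gramA : ∀ α α', ∑ i, RA α i * RA α' i = Nco * (if α = α' then 1 else 0))
    (gramB : ∀ α α', ∑ i, RB α i * RB α' i = Nco * (if α = α' then 1 else 0)) :
    Dᵀ * D = 1 ∧ D * Dᵀ = 1 := by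
  have key : ∀ α α', ∑ γ, D α γ * D α' γ = if α = α' then 1 else 0 := by
    intro α α'
    apply mul_left_cancel₀ hN
    rw [← gramA α α']
    have e1 : ∀ i, RA α i * RA α' i
        = ∑ γ, ∑ γ', (D α γ * D α' γ') * (RB γ i * RB γ' i) := by
      intro i
      rw [hD i α, hD i α', Finset.sum_mul_sum]
      apply Finset.sum_congr rfl; intro γ _
      apply Finset.sum_congr rfl; intro γ' _
      ring
    rw [Finset.sum_congr rfl (fun i _ => e1 i)]
    rw [Finset.sum_comm]
    rw [Finset.sum_congr rfl (fun γ _ => Finset.sum_comm)]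
    have e2 : ∀ γ, ∑ γ', ∑ i, (D α γ * D α' γ') * (RB γ i * RB γ' i)
        = Nco * (D α γ * D α' γ) := by
      intro γ
      have e3 : ∀ γ', ∑ i, (D α γ * D α' γ') * (RB γ i * RB γ' i)
          = (D α γ * D α' γ') * (Nco * (if γ = γ' then 1 else 0)) := by
        intro γ'
        rw [← Finset.mul_sum, gramB γ γ']
      rw [Finset.sum_congr rfl (fun γ' _ => e3 γ')]
      exact sum_mul_delta (fun γ' => D α γ * D α' γ') Nco γ
    rw [Finset.sum_congr rfl (fun γ _ => e2 γ), ← Finset.mul_sum]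
  have h2 : D * Dᵀ = 1 := by
    ext α α'
    rw [Matrix.mul_apply, Matrix.one_apply]
    calc ∑ γ, D α γ * Dᵀ γ α' = ∑ γ, D α γ * D α' γ := rfl
      _ = _ := key α α'
  exact ⟨mul_eq_one_comm.mp h2, h2⟩
end


lemma colSpace_mul_surj {γ : Type} {m : ℕ} (M : Matrix γ (Fin m) ℝ)
    (C : Matrix (Fin m) (Fin m) ℝ) (h : Function.Surjective C.mulVecLin) :
    colSpace (M * C) = colSpace M := by
  unfold colSpace
  rw [Matrix.mulVecLin_mul, LinearMap.range_comp, LinearMap.range_eq_top.mpr h,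
    Submodule.map_top]

end TT

namespace TT

/-- Invariance of TT core coherences: for a unitarily invariant matrix norm `‖·‖_u` and
minimal TT factorizations of the same tensor — a left-orthogonal `{U_s}`, a right-orthogonal
`{V_s}` and a `t`-orthogonal `{T_s}` — one has `μ_{u,<}(T_s) = μ_{u,<}(U_s)` for
`s = 1,…,min{t,d−1}` and `μ_{u,>}(T_s) = μ_{u,>}(V_s)` for `s = max{2,t},…,d`. -/
theorem tt_core_coherence_invariant
    (ν : ∀ p q : ℕ, Matrix (Fin p) (Fin q) ℝ → ℝ)
    (hnonneg : ∀ p q (A : Matrix (Fin p) (Fin q) ℝ), 0 ≤ ν p q A)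
    (hinv : ∀ p q (A : Matrix (Fin p) (Fin q) ℝ)
      (P : Matrix (Fin p) (Fin p) ℝ) (Q : Matrix (Fin q) (Fin q) ℝ),
      Pᵀ * P = 1 → P * Pᵀ = 1 → Qᵀ * Q = 1 → Q * Qᵀ = 1 →
      ν p q (P * A * Q) = ν p q A)
    (d : ℕ) (hd : 2 ≤ d) (n : Fin d → ℕ) (ρ : Fin (d + 1) → ℕ)
    (hρ0 : ρ 0 = 1) (hρd : ρ (Fin.last d) = 1)
    (A : (∀ s : Fin d, Fin (n s)) → ℝ)
    (U V T : ∀ s : Fin d, Fin (ρ s.castSucc) → Fin (n s) → Fin (ρ s.succ) → ℝ)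
    (t : ℕ) (ht1 : 1 ≤ t) (htd : t ≤ d)
    (hUA : ttEval n ρ U = A) (hVA : ttEval n ρ V = A) (hTA : ttEval n ρ T = A)
    (hUmin : MinimalTT U) (hVmin : MinimalTT V) (hTmin : MinimalTT T)
    (hUorth : TOrth d U) (hVorth : TOrth 1 V) (hTorth : TOrth t T) :
    (∀ s : Fin d, s.val + 1 ≤ min t (d - 1) → muLeft ν (T s) = muLeft ν (U s)) ∧
    (∀ s : Fin d, max 2 t ≤ s.val + 1 → muRight ν (T s) = muRight ν (V s)) := by
  obtain ⟨hn, hρpos⟩ := minimal_pos U hUmin hρ0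
  have hevalTU : ttEval n ρ T = ttEval n ρ U := hTA.trans hUA.symm
  have hevalTV : ttEval n ρ T = ttEval n ρ V := hTA.trans hVA.symm
  constructor
  · rintro ⟨s0, hs0d⟩ hcond
    have hcond' : s0 + 1 ≤ min t (d - 1) := hcond
    have hst : s0 + 1 ≤ t := le_trans hcond' (min_le_left _ _)
    have hsd1 : s0 + 1 ≤ d - 1 := le_trans hcond' (min_le_right _ _)
    have horthT : ∀ j : Fin d, j.val < s0 → LeftOrth (T j) :=
      fun j hj => hTorth.1 j (by omega)
    have horthU : ∀ j : Fin d, j.val < s0 → LeftOrth (U j) :=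
      fun j hj => hUorth.1 j (by omega)
    have hNc1 : Nc n (s0 + 1) ≠ 0 := (Nc_pos hn _).ne'
    obtain ⟨C, hC⟩ := Lmat_col_le T U hTmin hρpos hρd hn hevalTU s0 hs0d.le
    have gT := Lmat_gram T hn hρ0 s0 hs0d.le horthT
    have gU := Lmat_gram U hn hρ0 s0 hs0d.le horthU
    obtain ⟨hC1, hC2⟩ := gauge_orth_left (fun i β => Lmat T s0 hs0d.le i β)
      (fun i β => Lmat U s0 hs0d.le i β) C (Nc n s0) (Nc_pos hn _).ne' hC gT gU
    obtain ⟨C', hC'⟩ := Lmat_col_le T U hTmin hρpos hρd hn hevalTU (s0 + 1) hs0d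
    let Cb : Matrix (Fin (ρ (Fin.castSucc (⟨s0, hs0d⟩ : Fin d))))
      (Fin (ρ (Fin.castSucc (⟨s0, hs0d⟩ : Fin d)))) ℝ := C
    let C2 : Matrix (Fin (ρ (Fin.succ (⟨s0, hs0d⟩ : Fin d))))
      (Fin (ρ (Fin.succ (⟨s0, hs0d⟩ : Fin d)))) ℝ := C'
    have hker : ∀ v, C'.mulVecLin v = 0 → v = 0 := by
      intro v hv
      apply Lmat_inj T hTmin hρ0 hn (s0 + 1) hs0d v
      intro i
      calc ∑ α, Lmat T (s0 + 1) hs0d i α * v α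
          = ∑ α, ∑ γ, Lmat U (s0 + 1) hs0d i γ * C' γ α * v α := by
            apply Finset.sum_congr rfl
            intro α _
            rw [hC' i α, Finset.sum_mul]
        _ = ∑ γ, Lmat U (s0 + 1) hs0d i γ * ∑ α, C' γ α * v α := by
            rw [Finset.sum_comm]
            apply Finset.sum_congr rfl
            intro γ _
            rw [Finset.mul_sum]
            apply Finset.sum_congr rfl
            intro α _
            ring
        _ = 0 := by
            apply Finset.sum_eq_zero
            intro γ _
            have h0 : ∑ α, C' γ α * v α = 0 := by
              have h1 := congrFun hv γ
              exact h1
            rw [h0, mul_zero]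
    have hinjC' : Function.Injective C'.mulVecLin := by
      rw [← LinearMap.ker_eq_bot, LinearMap.ker_eq_bot']
      exact fun v hv => hker v hv
    have hsurjC' : Function.Surjective C'.mulVecLin :=
      LinearMap.injective_iff_surjective.mp hinjC'
    have hTU : ∀ (β : Fin (ρ ⟨s0, Nat.lt_succ_of_le hs0d.le⟩)) (x : Fin (n ⟨s0, hs0d⟩))
        (α : Fin (ρ ⟨s0 + 1, Nat.succ_lt_succ hs0d⟩)),
        T ⟨s0, hs0d⟩ β x α = ∑ γ, ∑ δ, (C γ β * C' δ α) * U ⟨s0, hs0d⟩ γ x δ := by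
      intro β x α
      apply mul_left_cancel₀ hNc1
      rw [← Lmat_extract T hn hρ0 s0 hs0d horthT β x α]
      have hfun : (fun i => Lmat T s0 hs0d.le i β * Lmat T (s0 + 1) hs0d i α)
          = (fun i => ∑ γ, ∑ δ, (C γ β * C' δ α) *
              (Lmat U s0 hs0d.le i γ * Lmat U (s0 + 1) hs0d i δ)) := by
        funext i
        rw [hC i β, hC' i α, Finset.sum_mul_sum]
        apply Finset.sum_congr rfl
        intro γ _
        apply Finset.sum_congr rfl
        intro δ _
        ring
      rw [hfun, resSum_sum]
      rw [Finset.sum_congr rfl (fun γ _ => by rw [resSum_sum])]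
      rw [Finset.sum_congr rfl (fun γ _ => Finset.sum_congr rfl (fun δ _ => by
        rw [resSum_const_mul, Lmat_extract U hn hρ0 s0 hs0d horthU γ x δ]))]
      rw [Finset.mul_sum]
      apply Finset.sum_congr rfl
      intro γ _
      rw [Finset.mul_sum]
      apply Finset.sum_congr rfl
      intro δ _
      ring
    have hmat : leftUnf (T ⟨s0, hs0d⟩)
        = blk (n := n ⟨s0, hs0d⟩) Cbᵀ * (leftUnf (U ⟨s0, hs0d⟩) * C2) := by
      ext p α
      rw [Matrix.mul_apply, Fintype.sum_prod_type]
      rw [Finset.sum_eq_single p.1]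
      · have hlhs : leftUnf (T ⟨s0, hs0d⟩) p α = T ⟨s0, hs0d⟩ p.2 p.1 α := rfl
        rw [hlhs, hTU p.2 p.1 α]
        apply Finset.sum_congr rfl
        intro γ _
        have hblk : blk (n := n ⟨s0, hs0d⟩) Cbᵀ p (p.1, γ) = C γ p.2 := by
          unfold blk
          rw [if_pos rfl]
          rfl
        rw [hblk, Matrix.mul_apply, Finset.mul_sum]
        apply Finset.sum_congr rfl
        intro δ _
        have hU : leftUnf (U ⟨s0, hs0d⟩) (p.1, γ) δ = U ⟨s0, hs0d⟩ γ p.1 δ := rfl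
        have hC2e : C2 δ α = C' δ α := rfl
        rw [hU, hC2e]
        ring
      · intro x' _ hx'
        apply Finset.sum_eq_zero
        intro γ _
        have hblk : blk (n := n ⟨s0, hs0d⟩) Cbᵀ p (x', γ) = 0 := by
          unfold blk
          rw [if_neg (show ¬ (p.1 = x') from fun hh => hx' hh.symm)]
        rw [hblk, zero_mul]
      · intro hp
        exact absurd (Finset.mem_univ p.1) hp
    have hcsp : colSpace (leftUnf (T ⟨s0, hs0d⟩))
        = Submodule.map (blk (n := n ⟨s0, hs0d⟩) Cbᵀ).mulVecLin
            (colSpace (leftUnf (U ⟨s0, hs0d⟩))) := by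
      rw [hmat, colSpace_mul_left]
      rw [colSpace_mul_surj (leftUnf (U ⟨s0, hs0d⟩)) C2 hsurjC']
    show muLeft ν (T ⟨s0, hs0d⟩) = muLeft ν (U ⟨s0, hs0d⟩)
    unfold muLeft
    rw [hcsp]
    exact blockCoh_map ν hinv Cbᵀ
      (by rw [Matrix.transpose_transpose]; show C * Cᵀ = 1; exact hC2)
      (by show Cᵀ * Cᵀᵀ = 1; rw [Matrix.transpose_transpose]; exact hC1) _
  · rintro ⟨s0, hs0d⟩ hcond
    have hcond' : max 2 t ≤ s0 + 1 := hcond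
    have hs1 : 1 ≤ s0 := by omega
    have hts : t ≤ s0 + 1 := le_trans (le_max_right _ _) hcond'
    have horthT' : ∀ j : Fin d, s0 + 1 ≤ j.val → RightOrth (T j) :=
      fun j hj => hTorth.2 j (by omega)
    have horthV' : ∀ j : Fin d, s0 + 1 ≤ j.val → RightOrth (V j) :=
      fun j hj => hVorth.2 j (by omega)
    have hMc0 : Mc n s0 ≠ 0 := (Mc_pos hn _).ne'
    obtain ⟨D, hD⟩ := Rmat_row_le T V hTmin hρpos hρ0 hn hevalTV (s0 + 1) hs0d
    have gRT := Rmat_gram T hn hρd (s0 + 1) hs0d horthT'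
    have gRV := Rmat_gram V hn hρd (s0 + 1) hs0d horthV'
    obtain ⟨hD1, hD2⟩ := gauge_orth_right (fun α i => Rmat T (s0 + 1) hs0d α i)
      (fun α i => Rmat V (s0 + 1) hs0d α i) D (Mc n (s0 + 1)) (Mc_pos hn _).ne' hD gRT gRV
    obtain ⟨C'', hC''⟩ := Rmat_row_le T V hTmin hρpos hρ0 hn hevalTV s0 hs0d.le
    let D2 : Matrix (Fin (ρ (Fin.succ (⟨s0, hs0d⟩ : Fin d))))
      (Fin (ρ (Fin.succ (⟨s0, hs0d⟩ : Fin d)))) ℝ := D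
    let Ct : Matrix (Fin (ρ (Fin.castSucc (⟨s0, hs0d⟩ : Fin d))))
      (Fin (ρ (Fin.castSucc (⟨s0, hs0d⟩ : Fin d)))) ℝ := C''ᵀ
    have hker : ∀ v, (C''ᵀ).mulVecLin v = 0 → v = 0 := by
      intro v hv
      apply Rmat_inj T hTmin hρd hn s0 hs0d.le v
      intro i
      calc ∑ β, v β * Rmat T s0 hs0d.le β i
          = ∑ β, ∑ γ, v β * (C'' β γ * Rmat V s0 hs0d.le γ i) := by
            apply Finset.sum_congr rfl
            intro β _
            rw [hC'' i β, Finset.mul_sum]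
        _ = ∑ γ, (∑ β, C'' β γ * v β) * Rmat V s0 hs0d.le γ i := by
            rw [Finset.sum_comm]
            apply Finset.sum_congr rfl
            intro γ _
            rw [Finset.sum_mul]
            apply Finset.sum_congr rfl
            intro β _
            ring
        _ = 0 := by
            apply Finset.sum_eq_zero
            intro γ _
            have h0 : ∑ β, C'' β γ * v β = 0 := by
              have h1 := congrFun hv γ
              exact h1
            rw [h0, zero_mul]
    have hinjC'' : Function.Injective (C''ᵀ).mulVecLin := by
      rw [← LinearMap.ker_eq_bot, LinearMap.ker_eq_bot']
      exact fun v hv => hker v hv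
    have hsurjC'' : Function.Surjective (C''ᵀ).mulVecLin :=
      LinearMap.injective_iff_surjective.mp hinjC''
    have hTV : ∀ (β : Fin (ρ ⟨s0, Nat.lt_succ_of_le hs0d.le⟩)) (x : Fin (n ⟨s0, hs0d⟩))
        (α : Fin (ρ ⟨s0 + 1, Nat.succ_lt_succ hs0d⟩)),
        T ⟨s0, hs0d⟩ β x α = ∑ γ, ∑ δ, (D α γ * C'' β δ) * V ⟨s0, hs0d⟩ δ x γ := by
      intro β x α
      apply mul_left_cancel₀ hMc0
      rw [← Rmat_extract T hn hρd s0 hs0d horthT' β x α]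
      have hfun : (fun i => Rmat T (s0 + 1) hs0d α i * Rmat T s0 hs0d.le β i)
          = (fun i => ∑ γ, ∑ δ, (D α γ * C'' β δ) *
              (Rmat V (s0 + 1) hs0d γ i * Rmat V s0 hs0d.le δ i)) := by
        funext i
        rw [hD i α, hC'' i β, Finset.sum_mul_sum]
        apply Finset.sum_congr rfl
        intro γ _
        apply Finset.sum_congr rfl
        intro δ _
        ring
      rw [hfun, resSum_sum]
      rw [Finset.sum_congr rfl (fun γ _ => by rw [resSum_sum])]
      rw [Finset.sum_congr rfl (fun γ _ => Finset.sum_congr rfl (fun δ _ => by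
        rw [resSum_const_mul, Rmat_extract V hn hρd s0 hs0d horthV' δ x γ]))]
      rw [Finset.mul_sum]
      apply Finset.sum_congr rfl
      intro γ _
      rw [Finset.mul_sum]
      apply Finset.sum_congr rfl
      intro δ _
      ring
    have hmat : (rightUnf (T ⟨s0, hs0d⟩))ᵀ
        = blk (n := n ⟨s0, hs0d⟩) D2 * ((rightUnf (V ⟨s0, hs0d⟩))ᵀ * Ct) := by
      ext p β
      rw [Matrix.mul_apply, Fintype.sum_prod_type]
      rw [Finset.sum_eq_single p.1]
      · have hlhs : (rightUnf (T ⟨s0, hs0d⟩))ᵀ p β = T ⟨s0, hs0d⟩ β p.1 p.2 := rfl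
        rw [hlhs, hTV β p.1 p.2]
        apply Finset.sum_congr rfl
        intro γ _
        have hblk : blk (n := n ⟨s0, hs0d⟩) D2 p (p.1, γ) = D p.2 γ := by
          unfold blk
          rw [if_pos rfl]
        rw [hblk, Matrix.mul_apply, Finset.mul_sum]
        apply Finset.sum_congr rfl
        intro δ _
        have hV : (rightUnf (V ⟨s0, hs0d⟩))ᵀ (p.1, γ) δ = V ⟨s0, hs0d⟩ δ p.1 γ := rfl
        have hCt : Ct δ β = C'' β δ := rfl
        rw [hV, hCt]
        ring
      · intro x' _ hx'
        apply Finset.sum_eq_zero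
        intro γ _
        have hblk : blk (n := n ⟨s0, hs0d⟩) D2 p (x', γ) = 0 := by
          unfold blk
          rw [if_neg (show ¬ (p.1 = x') from fun hh => hx' hh.symm)]
        rw [hblk, zero_mul]
      · intro hp
        exact absurd (Finset.mem_univ p.1) hp
    have hcsp : rowSpace (rightUnf (T ⟨s0, hs0d⟩))
        = Submodule.map (blk (n := n ⟨s0, hs0d⟩) D2).mulVecLin
            (rowSpace (rightUnf (V ⟨s0, hs0d⟩))) := by
      unfold rowSpace
      rw [hmat, colSpace_mul_left]
      rw [colSpace_mul_surj ((rightUnf (V ⟨s0, hs0d⟩))ᵀ) Ct hsurjC'']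
    show muRight ν (T ⟨s0, hs0d⟩) = muRight ν (V ⟨s0, hs0d⟩)
    unfold muRight
    rw [hcsp]
    exact blockCoh_map ν hinv D2 (show Dᵀ * D = 1 from hD1) (show D * Dᵀ = 1 from hD2) _

end TT
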